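/- arXiv:1809.08408 — 4 statements merged into one kernel-verified Lean document; each statement's English description precedes it below -/
import Mathlib

section
/- Let G be a finite simple graph with n ≥ 1 vertices and let c(G) := (-1)^n · Σ_{k=1}^{n} (-1)^k c_k(G)/k, where c_k(G) is the number of ordered partitions of the vertex set into k nonempty independent subsets. Then c(G) > 0 if and only if G is connected. -/
open Finset

/-- A finset of vertices is independent: no two of its elements are adjacent. -/
def IndepSet {V : Type*} (G : SimpleGraph V) (S : Finset V) : Prop :=
  ∀ v ∈ S, ∀ w ∈ S, ¬ G.Adj v w

/-- The number of ordered `k`-partitions of the vertex set of `G` into nonempty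
pairwise disjoint independent subsets. -/
noncomputable def orderedPartCount {V : Type*} [Fintype V] (G : SimpleGraph V) (k : ℕ) : ℕ :=
  Nat.card {J : Fin k → Finset V //
    (∀ i, (J i).Nonempty) ∧ (∀ i, IndepSet G (J i)) ∧
    (∀ i j, i ≠ j → Disjoint (J i) (J j)) ∧ (∀ v : V, ∃ i, v ∈ J i)}

/-- The quantity `c(G) = (-1)^n ∑_{k=1}^n (-1)^k c_k(G)/k`. -/
noncomputable def cNum {V : Type*} [Fintype V] (G : SimpleGraph V) : ℚ :=
  (-1 : ℚ) ^ (Fintype.card V) *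
    ∑ k ∈ Finset.Icc 1 (Fintype.card V), (-1 : ℚ) ^ k * (orderedPartCount G k : ℚ) / k

namespace CProof

attribute [local instance] Classical.propDecidable

set_option linter.unusedSectionVars false

variable {V : Type*} [Fintype V] [DecidableEq V] (G : SimpleGraph V)

/-- Conditions for an ordered partition of `W` into independent sets. -/
def OPCond (W : Finset V) {k : ℕ} (J : Fin k → Finset V) : Prop :=
  (∀ i, (J i).Nonempty) ∧ (∀ i, IndepSet G (J i)) ∧
  (∀ i j, i ≠ j → Disjoint (J i) (J j)) ∧ (∀ i, J i ⊆ W) ∧ (∀ v ∈ W, ∃ i, v ∈ J i)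

noncomputable def OP (W : Finset V) (k : ℕ) : ℕ :=
  Nat.card {J : Fin k → Finset V // OPCond G W J}

lemma OP_eq_zero_of_card_lt {W : Finset V} {k : ℕ} (h : W.card < k) : OP G W k = 0 := by
  have : IsEmpty {J : Fin k → Finset V // OPCond G W J} := by
    constructor
    rintro ⟨J, h1, _, h3, h4, _⟩
    have hf : ∀ i : Fin k, ∃ x, x ∈ J i := fun i => h1 i
    choose f hfmem using hf
    have : (Finset.univ : Finset (Fin k)).card ≤ W.card := by
      apply Finset.card_le_card_of_injOn f (fun i _ => h4 i (hfmem i))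
      intro i _ j _ hij
      by_contra hne
      have : f i ∈ J i ∩ J j := Finset.mem_inter.mpr ⟨hfmem i, hij ▸ hfmem j⟩
      rw [Finset.disjoint_iff_inter_eq_empty.mp (h3 i j hne)] at this
      simp at this
    simp only [Finset.card_univ, Fintype.card_fin] at this
    omega
  simp [OP, Nat.card_of_isEmpty]

lemma OP_empty_zero : OP G (∅ : Finset V) 0 = 1 := by
  have : Unique {J : Fin 0 → Finset V // OPCond G (∅ : Finset V) J} := by
    refine ⟨⟨⟨fun i => i.elim0, ?_⟩⟩, ?_⟩
    · refine ⟨fun i => i.elim0, fun i => i.elim0, fun i => i.elim0, fun i => i.elim0, ?_⟩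
      intro v hv; simp at hv
    · rintro ⟨J, _⟩
      apply Subtype.ext
      funext i; exact i.elim0
  simp [OP, Nat.card_unique]

lemma OP_zero_of_nonempty {W : Finset V} (h : W.Nonempty) : OP G W 0 = 0 := by
  have : IsEmpty {J : Fin 0 → Finset V // OPCond G W J} := by
    constructor
    rintro ⟨J, _, _, _, _, h5⟩
    obtain ⟨v, hv⟩ := h
    obtain ⟨i, _⟩ := h5 v hv
    exact i.elim0
  simp [OP, Nat.card_of_isEmpty]

lemma card_fiber_last (W I : Finset V) (Q : Finset V → Prop) (k : ℕ)
    (hIW : I ⊆ W) (hne : I.Nonempty) (hind : IndepSet G I) (hQI : Q I) :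
    Nat.card {J : Fin (k+1) → Finset V //
        (OPCond G W J ∧ Q (J (Fin.last k))) ∧ J (Fin.last k) = I}
      = OP G (W \ I) k := by
  refine Nat.card_congr ⟨fun J => ⟨Fin.init J.1, ?_⟩, fun J' => ⟨Fin.snoc J'.1 I, ?_⟩, ?_, ?_⟩
  · obtain ⟨J, ⟨⟨h1, h2, h3, h4, h5⟩, _⟩, hlast⟩ := J
    refine ⟨fun i => h1 _, fun i => h2 _, fun i j hij => h3 _ _ ?_, fun i => ?_, fun v hv => ?_⟩
    · simpa [Fin.castSucc_inj] using hij
    · intro x hx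
      rw [Finset.mem_sdiff]
      refine ⟨h4 _ hx, fun hxI => ?_⟩
      have hd := h3 i.castSucc (Fin.last k) (Fin.castSucc_lt_last i).ne
      rw [← hlast] at hxI
      exact (Finset.disjoint_left.mp hd) hx hxI
    · rw [Finset.mem_sdiff] at hv
      obtain ⟨i, hi⟩ := h5 v hv.1
      have : i ≠ Fin.last k := by
        rintro rfl; exact hv.2 (hlast ▸ hi)
      obtain ⟨i', rfl⟩ := Fin.exists_castSucc_eq.mpr this
      exact ⟨i', hi⟩
  · obtain ⟨J', h1, h2, h3, h4, h5⟩ := J'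
    refine ⟨⟨⟨fun i => ?_, fun i => ?_, fun i j hij => ?_, fun i => ?_, fun v hv => ?_⟩, ?_⟩, ?_⟩
    · induction i using Fin.lastCases with
      | last => simpa [Fin.snoc_last] using hne
      | cast i => simpa [Fin.snoc_castSucc] using h1 i
    · induction i using Fin.lastCases with
      | last => simpa [Fin.snoc_last] using hind
      | cast i => simpa [Fin.snoc_castSucc] using h2 i
    · induction i using Fin.lastCases with
      | last =>
        induction j using Fin.lastCases with
        | last => exact absurd rfl hij
        | cast j =>
          simp only [Fin.snoc_last, Fin.snoc_castSucc]
          rw [Finset.disjoint_right]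
          intro x hx
          exact fun hxI => (Finset.mem_sdiff.mp (h4 j hx)).2 hxI
      | cast i =>
        induction j using Fin.lastCases with
        | last =>
          simp only [Fin.snoc_last, Fin.snoc_castSucc]
          rw [Finset.disjoint_left]
          intro x hx
          exact fun hxI => (Finset.mem_sdiff.mp (h4 i hx)).2 hxI
        | cast j =>
          simp only [Fin.snoc_castSucc]
          exact h3 i j (by simpa [Fin.castSucc_inj] using hij)
    · induction i using Fin.lastCases with
      | last => simpa [Fin.snoc_last] using hIW
      | cast i => simpa [Fin.snoc_castSucc] using (h4 i).trans (Finset.sdiff_subset)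
    · by_cases hvI : v ∈ I
      · exact ⟨Fin.last k, by simpa [Fin.snoc_last] using hvI⟩
      · obtain ⟨i, hi⟩ := h5 v (Finset.mem_sdiff.mpr ⟨hv, hvI⟩)
        exact ⟨i.castSucc, by simpa [Fin.snoc_castSucc] using hi⟩
    · simpa [Fin.snoc_last] using hQI
    · simp [Fin.snoc_last]
  · rintro ⟨J, hJ, hlast⟩
    apply Subtype.ext
    simp only
    rw [← hlast]
    exact Fin.snoc_init_self J
  · rintro ⟨J', hJ'⟩
    apply Subtype.ext
    simp only
    simp

lemma OP_lastBlock (W : Finset V) (Q : Finset V → Prop) (k : ℕ) :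
    Nat.card {J : Fin (k+1) → Finset V // OPCond G W J ∧ Q (J (Fin.last k))}
      = ∑ I ∈ W.powerset.filter (fun I => I.Nonempty ∧ IndepSet G I ∧ Q I),
          OP G (W \ I) k := by
  rw [Nat.card_eq_fintype_card, Fintype.card_subtype]
  rw [Finset.card_eq_sum_card_fiberwise
      (f := fun J : Fin (k+1) → Finset V => J (Fin.last k))
      (t := W.powerset.filter (fun I => I.Nonempty ∧ IndepSet G I ∧ Q I))
      (fun J hJ => by
        simp only [Finset.coe_filter, Set.mem_setOf_eq, Finset.mem_filter, Finset.mem_univ, true_and] at hJ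
        obtain ⟨⟨h1, h2, h3, h4, h5⟩, hQ⟩ := hJ
        simp only [Finset.coe_filter, Set.mem_setOf_eq, Finset.mem_filter, Finset.mem_powerset]
        exact ⟨h4 _, h1 _, h2 _, hQ⟩)]
  refine Finset.sum_congr rfl fun I hI => ?_
  simp only [Finset.mem_filter, Finset.mem_powerset] at hI
  obtain ⟨hIW, hne, hind, hQI⟩ := hI
  rw [Finset.filter_filter, ← Fintype.card_subtype, ← Nat.card_eq_fintype_card]
  exact card_fiber_last G W I Q k hIW hne hind hQI
/-- The set of directed edges of an orientation, sources. -/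
def SrcSet (W : Finset V) (D : Finset (V × V)) : Finset V :=
  W.filter (fun v => ∀ u, (u, v) ∉ D)

/-- `D` is an acyclic orientation of the subgraph induced on `W`. -/
def IsAO (W : Finset V) (D : Finset (V × V)) : Prop :=
  (∀ p ∈ D, p.1 ∈ W ∧ p.2 ∈ W ∧ G.Adj p.1 p.2) ∧
  (∀ u v, u ∈ W → v ∈ W → G.Adj u v → ((u, v) ∈ D ↔ (v, u) ∉ D)) ∧
  (∀ S : Finset V, S ⊆ W → S.Nonempty → ∃ v ∈ S, ∀ u ∈ S, (u, v) ∉ D)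

noncomputable def aoCount (W : Finset V) : ℕ :=
  Nat.card {D : Finset (V × V) // IsAO G W D}

lemma indepSet_subset {S T : Finset V} (hT : IndepSet G T) (hST : S ⊆ T) : IndepSet G S :=
  fun v hv w hw => hT v (hST hv) w (hST hw)

lemma srcSet_indep {W : Finset V} {D : Finset (V × V)} (h : IsAO G W D) :
    IndepSet G (SrcSet W D) := by
  intro u hu v hv hadj
  simp only [SrcSet, Finset.mem_filter] at hu hv
  have h1 := hv.2 u
  have h2 := hu.2 v
  have h3 := h.2.1 u v hu.1 hv.1 hadj
  tauto

lemma srcSet_nonempty {W : Finset V} {D : Finset (V × V)} (hW : W.Nonempty) (h : IsAO G W D) :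
    (SrcSet W D).Nonempty := by
  obtain ⟨v, hv, hnod⟩ := h.2.2 W le_rfl hW
  refine ⟨v, ?_⟩
  simp only [SrcSet, Finset.mem_filter]
  exact ⟨hv, fun u hu => hnod u (h.1 _ hu).1 hu⟩

lemma aoCount_empty : aoCount G (∅ : Finset V) = 1 := by
  have : Unique {D : Finset (V × V) // IsAO G (∅ : Finset V) D} := by
    refine ⟨⟨⟨∅, ?_, ?_, ?_⟩⟩, ?_⟩
    · intro p hp; simp at hp
    · intro u v hu; simp at hu
    · intro S hS hSne; exact absurd (Finset.subset_empty.mp hS) hSne.ne_empty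
    · rintro ⟨D, hD1, _, _⟩
      apply Subtype.ext
      simp only
      rw [Finset.eq_empty_iff_forall_notMem]
      intro p hp
      simpa using (hD1 p hp).1
  simp [aoCount, Nat.card_unique]
lemma AO_restrict (W I : Finset V) (hIW : I ⊆ W) (hind : IndepSet G I) :
    Nat.card {D : Finset (V × V) // IsAO G W D ∧ I ⊆ SrcSet W D}
      = aoCount G (W \ I) := by
  classical
  refine Nat.card_congr
    ⟨fun D => ⟨D.1.filter (fun p => p.1 ∉ I ∧ p.2 ∉ I), ?_⟩,
     fun D' => ⟨D'.1 ∪ Finset.univ.filter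
        (fun p : V × V => p.1 ∈ I ∧ p.2 ∈ W ∧ p.2 ∉ I ∧ G.Adj p.1 p.2), ?_⟩, ?_, ?_⟩
  · obtain ⟨D, ⟨hd1, hd2, hd3⟩, hsrc⟩ := D
    refine ⟨?_, ?_, ?_⟩
    · intro p hp
      simp only [Finset.mem_filter] at hp
      obtain ⟨hpD, hp1, hp2⟩ := hp
      obtain ⟨hw1, hw2, hadj⟩ := hd1 p hpD
      exact ⟨Finset.mem_sdiff.mpr ⟨hw1, hp1⟩, Finset.mem_sdiff.mpr ⟨hw2, hp2⟩, hadj⟩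
    · intro u v hu hv hadj
      rw [Finset.mem_sdiff] at hu hv
      simp only [Finset.mem_filter, hu.2, hv.2, not_false_iff, and_true]
      exact (hd2 u v hu.1 hv.1 hadj).trans (by simp [hv.2, hu.2])
    · intro S hS hSne
      obtain ⟨v, hvS, hnod⟩ := hd3 S (hS.trans Finset.sdiff_subset) hSne
      exact ⟨v, hvS, fun u hu => fun hmem => hnod u hu (Finset.mem_filter.mp hmem).1⟩
  · obtain ⟨D', hd1, hd2, hd3⟩ := D'
    have hD'I : ∀ p ∈ D', p.1 ∉ I ∧ p.2 ∉ I := by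
      intro p hp
      obtain ⟨h1, h2, _⟩ := hd1 p hp
      exact ⟨(Finset.mem_sdiff.mp h1).2, (Finset.mem_sdiff.mp h2).2⟩
    constructor
    · refine ⟨?_, ?_, ?_⟩
      · intro p hp
        rcases Finset.mem_union.mp hp with h | h
        · obtain ⟨h1, h2, hadj⟩ := hd1 p h
          exact ⟨Finset.sdiff_subset h1, Finset.sdiff_subset h2, hadj⟩
        · simp only [Finset.mem_filter] at h
          exact ⟨hIW h.2.1, h.2.2.1, h.2.2.2.2⟩
      · intro u v hu hv hadj
        by_cases huI : u ∈ I <;> by_cases hvI : v ∈ I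
        · exact absurd hadj (hind u huI v hvI)
        · apply iff_of_true
          · apply Finset.mem_union_right
            simp only [Finset.mem_filter]
            exact ⟨Finset.mem_univ _, huI, hv, hvI, hadj⟩
          · intro hmem
            rcases Finset.mem_union.mp hmem with h | h
            · exact (hD'I _ h).2 huI
            · exact hvI (Finset.mem_filter.mp h).2.1
        · apply iff_of_false
          · intro hmem
            rcases Finset.mem_union.mp hmem with h | h
            · exact (hD'I _ h).2 hvI
            · exact huI (Finset.mem_filter.mp h).2.1
          · intro hmem
            apply hmem
            apply Finset.mem_union_right
            simp only [Finset.mem_filter]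
            exact ⟨Finset.mem_univ _, hvI, hu, huI, hadj.symm⟩
        · have h := hd2 u v (Finset.mem_sdiff.mpr ⟨hu, huI⟩) (Finset.mem_sdiff.mpr ⟨hv, hvI⟩) hadj
          simp only [Finset.mem_union, Finset.mem_filter, Finset.mem_univ, true_and]
          tauto
      · intro S hS hSne
        by_cases hSI : (S ∩ I).Nonempty
        · obtain ⟨v, hv⟩ := hSI
          rw [Finset.mem_inter] at hv
          refine ⟨v, hv.1, fun u hu hmem => ?_⟩
          rcases Finset.mem_union.mp hmem with h | h
          · exact (hD'I _ h).2 hv.2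
          · exact (Finset.mem_filter.mp h).2.2.2.1 hv.2
        · have hS' : S ⊆ W \ I := by
            intro x hx
            refine Finset.mem_sdiff.mpr ⟨hS hx, fun hxI => ?_⟩
            exact hSI ⟨x, Finset.mem_inter.mpr ⟨hx, hxI⟩⟩
          obtain ⟨v, hvS, hnod⟩ := hd3 S hS' hSne
          refine ⟨v, hvS, fun u hu hmem => ?_⟩
          rcases Finset.mem_union.mp hmem with h | h
          · exact hnod u hu h
          · have : u ∈ I := (Finset.mem_filter.mp h).2.1
            exact (Finset.mem_sdiff.mp (hS' hu)).2 this
    · intro x hxI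
      simp only [SrcSet, Finset.mem_filter]
      refine ⟨hIW hxI, fun u hmem => ?_⟩
      rcases Finset.mem_union.mp hmem with h | h
      · exact (hD'I _ h).2 hxI
      · exact (Finset.mem_filter.mp h).2.2.2.1 hxI
  · rintro ⟨D, ⟨hd1, hd2, hd3⟩, hsrc⟩
    apply Subtype.ext
    simp only
    apply Finset.ext
    intro p
    simp only [Finset.mem_union, Finset.mem_filter, Finset.mem_univ, true_and]
    constructor
    · rintro (⟨hpD, _, _⟩ | ⟨h1, h2, h3, h4⟩)
      · exact hpD
      · have hp1W : p.1 ∈ W := hIW h1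
        have h5 := hd2 p.1 p.2 hp1W h2 h4
        rw [h5]
        intro hmem
        have := hsrc h1
        simp only [SrcSet, Finset.mem_filter] at this
        exact this.2 p.2 hmem
    · intro hpD
      obtain ⟨hw1, hw2, hadj⟩ := hd1 p hpD
      have hp2I : p.2 ∉ I := by
        intro h2I
        have := hsrc h2I
        simp only [SrcSet, Finset.mem_filter] at this
        exact this.2 p.1 hpD
      by_cases hp1I : p.1 ∈ I
      · exact Or.inr ⟨hp1I, hw2, hp2I, hadj⟩
      · exact Or.inl ⟨hpD, hp1I, hp2I⟩
  · rintro ⟨D', hd1, hd2, hd3⟩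
    apply Subtype.ext
    simp only
    have hD'I : ∀ p ∈ D', p.1 ∉ I ∧ p.2 ∉ I := by
      intro p hp
      obtain ⟨h1, h2, _⟩ := hd1 p hp
      exact ⟨(Finset.mem_sdiff.mp h1).2, (Finset.mem_sdiff.mp h2).2⟩
    apply Finset.ext
    intro p
    simp only [Finset.mem_filter, Finset.mem_union, Finset.mem_univ, true_and]
    constructor
    · rintro ⟨h | h, h1, h2⟩
      · exact h
      · exact absurd h.1 h1
    · intro hp
      exact ⟨Or.inl hp, (hD'I p hp).1, (hD'I p hp).2⟩
lemma sum_ne_powerset {α : Type*} [DecidableEq α] (T : Finset α) (hT : T.Nonempty) :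
    ∑ I ∈ T.powerset.filter (fun I => I.Nonempty), -(-1 : ℤ) ^ I.card = 1 := by
  have htot := Finset.sum_powerset_neg_one_pow_card (x := T)
  rw [if_neg hT.ne_empty] at htot
  have hsplit := Finset.sum_filter_add_sum_filter_not T.powerset (fun I => I.Nonempty)
    (fun I => (-1 : ℤ) ^ I.card)
  have hempty : T.powerset.filter (fun I => ¬ I.Nonempty) = {∅} := by
    apply Finset.ext
    intro I
    simp [Finset.not_nonempty_iff_eq_empty]
    rintro rfl; exact Finset.empty_subset T
  rw [htot, hempty, Finset.sum_singleton] at hsplit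
  simp only [Finset.card_empty, pow_zero] at hsplit
  have h1 : ∑ I ∈ T.powerset.filter (fun I => I.Nonempty), (-1 : ℤ) ^ I.card = -1 := by omega
  rw [Finset.sum_neg_distrib, h1]
  norm_num

lemma sum_v0_powerset {α : Type*} [DecidableEq α] (T : Finset α) (v0 : α) :
    ∑ I ∈ T.powerset.filter (fun I => v0 ∈ I), -(-1 : ℤ) ^ I.card
      = if T = {v0} then 1 else 0 := by
  by_cases hv0 : v0 ∈ T
  · have hbij : ∑ I ∈ T.powerset.filter (fun I => v0 ∈ I), -(-1 : ℤ) ^ I.card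
        = ∑ I' ∈ (T.erase v0).powerset, (-1 : ℤ) ^ I'.card := by
      apply Finset.sum_nbij' (fun I => I.erase v0) (fun I' => insert v0 I')
      · intro I hI
        simp only [Finset.mem_filter, Finset.mem_powerset] at hI
        simp only [Finset.mem_powerset]
        exact Finset.erase_subset_erase v0 hI.1
      · intro I' hI'
        simp only [Finset.mem_powerset] at hI'
        simp only [Finset.mem_filter, Finset.mem_powerset]
        exact ⟨Finset.insert_subset hv0 (hI'.trans (Finset.erase_subset v0 T)),
          Finset.mem_insert_self _ _⟩
      · intro I hI
        simp only [Finset.mem_filter] at hI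
        exact Finset.insert_erase hI.2
      · intro I' hI'
        simp only [Finset.mem_powerset] at hI'
        apply Finset.erase_insert
        intro hv0I'
        exact (Finset.notMem_erase v0 T) (hI' hv0I')
      · intro I hI
        simp only [Finset.mem_filter, Finset.mem_powerset] at hI
        have hc : I.card = (I.erase v0).card + 1 := by
          rw [Finset.card_erase_of_mem hI.2]
          have : 0 < I.card := Finset.card_pos.mpr ⟨v0, hI.2⟩
          omega
        rw [hc, pow_succ]
        ring
    rw [hbij, Finset.sum_powerset_neg_one_pow_card]
    have : T.erase v0 = ∅ ↔ T = {v0} := by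
      constructor
      · intro h
        apply Finset.ext
        intro x
        simp only [Finset.mem_singleton]
        constructor
        · intro hx
          by_contra hne
          have : x ∈ T.erase v0 := Finset.mem_erase.mpr ⟨hne, hx⟩
          simp [h] at this
        · rintro rfl; exact hv0
      · rintro rfl; simp
    by_cases h : T = {v0} <;> simp [h, this]
  · have : T.powerset.filter (fun I => v0 ∈ I) = ∅ := by
      apply Finset.eq_empty_of_forall_notMem
      intro I hI
      simp only [Finset.mem_filter, Finset.mem_powerset] at hI
      exact hv0 (hI.1 hI.2)
    rw [this]
    have : T ≠ {v0} := by rintro rfl; simp at hv0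
    simp [this]

lemma nat_card_subtype_filter (P : Finset (V × V) → Prop) :
    (Nat.card {D : Finset (V × V) // P D}) = (Finset.univ.filter P).card := by
  rw [Nat.card_eq_fintype_card, Fintype.card_subtype]

lemma aoCount_rec (W : Finset V) (hW : W.Nonempty) :
    (aoCount G W : ℤ)
      = ∑ I ∈ W.powerset.filter (fun I => I.Nonempty ∧ IndepSet G I),
          -(-1 : ℤ) ^ I.card * (aoCount G (W \ I) : ℤ) := by
  have step1 : ∀ I ∈ W.powerset.filter (fun I => I.Nonempty ∧ IndepSet G I),
      (aoCount G (W \ I) : ℤ)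
        = ∑ D ∈ Finset.univ.filter (IsAO G W), (if I ⊆ SrcSet W D then (1 : ℤ) else 0) := by
    intro I hI
    simp only [Finset.mem_filter, Finset.mem_powerset] at hI
    rw [← AO_restrict G W I hI.1 hI.2.2, nat_card_subtype_filter, Finset.card_filter,
      Finset.sum_filter]
    push_cast
    refine Finset.sum_congr rfl fun D _ => ?_
    by_cases h1 : IsAO G W D <;> by_cases h2 : I ⊆ SrcSet W D <;> simp [h1, h2]
  have hper : ∀ D ∈ Finset.univ.filter (IsAO G W),
      ∑ I ∈ W.powerset.filter (fun I => I.Nonempty ∧ IndepSet G I),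
        (if I ⊆ SrcSet W D then -(-1 : ℤ) ^ I.card else 0) = 1 := by
    intro D hD
    have hAO : IsAO G W D := (Finset.mem_filter.mp hD).2
    rw [← Finset.sum_filter]
    have hset : (W.powerset.filter (fun I => I.Nonempty ∧ IndepSet G I)).filter
          (fun I => I ⊆ SrcSet W D)
        = (SrcSet W D).powerset.filter (fun I => I.Nonempty) := by
      apply Finset.ext; intro I
      simp only [Finset.mem_filter, Finset.mem_powerset]
      constructor
      · rintro ⟨⟨hIW, hne, hind⟩, hsub⟩; exact ⟨hsub, hne⟩
      · rintro ⟨hsub, hne⟩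
        have hSrcW : SrcSet W D ⊆ W := Finset.filter_subset _ _
        exact ⟨⟨hsub.trans hSrcW, hne, indepSet_subset G (srcSet_indep G hAO) hsub⟩, hsub⟩
    rw [hset]
    exact sum_ne_powerset _ (srcSet_nonempty G hW hAO)
  calc (aoCount G W : ℤ)
      = ∑ _D ∈ Finset.univ.filter (IsAO G W), (1 : ℤ) := by
        rw [Finset.sum_const, aoCount, nat_card_subtype_filter]
        simp
    _ = ∑ D ∈ Finset.univ.filter (IsAO G W),
          ∑ I ∈ W.powerset.filter (fun I => I.Nonempty ∧ IndepSet G I),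
            (if I ⊆ SrcSet W D then -(-1 : ℤ) ^ I.card else 0) :=
        (Finset.sum_congr rfl hper).symm
    _ = ∑ I ∈ W.powerset.filter (fun I => I.Nonempty ∧ IndepSet G I),
          ∑ D ∈ Finset.univ.filter (IsAO G W),
            (if I ⊆ SrcSet W D then -(-1 : ℤ) ^ I.card else 0) := Finset.sum_comm
    _ = ∑ I ∈ W.powerset.filter (fun I => I.Nonempty ∧ IndepSet G I),
          -(-1 : ℤ) ^ I.card * (aoCount G (W \ I) : ℤ) := by
        refine Finset.sum_congr rfl fun I hI => ?_
        rw [step1 I hI, Finset.mul_sum]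
        refine Finset.sum_congr rfl fun D _ => ?_
        rw [mul_ite, mul_one, mul_zero]
noncomputable def gInt (W : Finset V) : ℤ :=
  (-1) ^ W.card * ∑ k ∈ Finset.range (W.card + 1), (-1 : ℤ) ^ k * (OP G W k : ℤ)

lemma gInt_empty : gInt G (∅ : Finset V) = 1 := by
  simp [gInt, OP_empty_zero]

lemma OP_sum_trunc (W : Finset V) {m : ℕ} (hm : W.card ≤ m) :
    ∑ k ∈ Finset.range (m + 1), (-1 : ℤ) ^ k * (OP G W k : ℤ)
      = (-1) ^ W.card * gInt G W := by
  have hsub : Finset.range (W.card + 1) ⊆ Finset.range (m + 1) :=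
    Finset.range_subset_range.mpr (by omega)
  have h0 : ∀ k ∈ Finset.range (m + 1), k ∉ Finset.range (W.card + 1) →
      (-1 : ℤ) ^ k * (OP G W k : ℤ) = 0 := by
    intro k _ hk
    rw [Finset.mem_range, not_lt] at hk
    rw [OP_eq_zero_of_card_lt G (by omega)]
    simp
  rw [← Finset.sum_subset hsub h0, gInt, ← mul_assoc, ← pow_add]
  rw [Even.neg_one_pow ⟨W.card, rfl⟩, one_mul]

lemma OP_succ (W : Finset V) (k : ℕ) :
    OP G W (k + 1)
      = ∑ I ∈ W.powerset.filter (fun I => I.Nonempty ∧ IndepSet G I), OP G (W \ I) k := by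
  have h := OP_lastBlock G W (fun _ => True) k
  have e : OP G W (k + 1)
      = Nat.card {J : Fin (k+1) → Finset V // OPCond G W J ∧ True} := by
    rw [OP]
    exact Nat.card_congr (Equiv.subtypeEquivRight (by tauto))
  rw [e, h]
  refine Finset.sum_congr ?_ (fun _ _ => rfl)
  apply Finset.ext
  intro I
  simp only [Finset.mem_filter, and_true]

lemma gInt_rec (W : Finset V) (hW : W.Nonempty) :
    gInt G W = ∑ I ∈ W.powerset.filter (fun I => I.Nonempty ∧ IndepSet G I),
        -(-1 : ℤ) ^ I.card * gInt G (W \ I) := by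
  have hc : 1 ≤ W.card := Finset.card_pos.mpr hW
  have step : ∑ k ∈ Finset.range (W.card + 1), (-1 : ℤ) ^ k * (OP G W k : ℤ)
      = ∑ k ∈ Finset.range W.card, (-1 : ℤ) ^ (k+1) * (OP G W (k+1) : ℤ) := by
    rw [Finset.sum_range_succ']
    rw [OP_zero_of_nonempty G hW]
    simp
  rw [gInt, step]
  have step2 : ∀ k ∈ Finset.range W.card,
      (-1 : ℤ) ^ (k+1) * (OP G W (k+1) : ℤ)
        = ∑ I ∈ W.powerset.filter (fun I => I.Nonempty ∧ IndepSet G I),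
            (-1 : ℤ) ^ (k+1) * (OP G (W \ I) k : ℤ) := by
    intro k _
    rw [OP_succ G W k]
    push_cast
    rw [Finset.mul_sum]
  rw [Finset.sum_congr rfl step2, Finset.sum_comm, Finset.mul_sum]
  refine Finset.sum_congr rfl fun I hI => ?_
  simp only [Finset.mem_filter, Finset.mem_powerset] at hI
  have hIc : I.card ≤ W.card := Finset.card_le_card hI.1
  have hIpos : 1 ≤ I.card := Finset.card_pos.mpr hI.2.1
  have hsd : (W \ I).card = W.card - I.card := Finset.card_sdiff_of_subset hI.1
  have inner : ∑ k ∈ Finset.range W.card, (-1 : ℤ) ^ (k+1) * (OP G (W \ I) k : ℤ)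
      = -((-1) ^ (W \ I).card * gInt G (W \ I)) := by
    have hm : (W \ I).card ≤ W.card - 1 := by omega
    have : Finset.range W.card = Finset.range ((W.card - 1) + 1) := by
      congr 1; omega
    rw [this, ← OP_sum_trunc G (W \ I) hm, ← Finset.sum_neg_distrib]
    refine Finset.sum_congr rfl fun k _ => ?_
    rw [pow_succ]
    ring
  rw [inner, hsd]
  have hsplit : (-1 : ℤ) ^ W.card = (-1) ^ (W.card - I.card) * (-1) ^ I.card := by
    rw [← pow_add, Nat.sub_add_cancel hIc]
  rw [hsplit]
  have hsq : ((-1 : ℤ) ^ (W.card - I.card)) * ((-1) ^ (W.card - I.card)) = 1 := by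
    rw [← pow_add]; exact Even.neg_one_pow ⟨W.card - I.card, rfl⟩
  linear_combination (-((-1 : ℤ) ^ I.card) * gInt G (W \ I)) * hsq

lemma gInt_eq_aoCount (W : Finset V) : gInt G W = (aoCount G W : ℤ) := by
  induction W using Finset.strongInduction with
  | _ W ih =>
    rcases W.eq_empty_or_nonempty with rfl | hW
    · rw [gInt_empty, aoCount_empty]; norm_num
    · rw [gInt_rec G W hW, aoCount_rec G W hW]
      refine Finset.sum_congr rfl fun I hI => ?_
      simp only [Finset.mem_filter, Finset.mem_powerset] at hI
      rw [ih (W \ I) (Finset.sdiff_ssubset hI.1 hI.2.1)]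
lemma OPCond_equiv {W : Finset V} {k : ℕ} {J : Fin k → Finset V} (σ : Equiv.Perm (Fin k))
    (h : OPCond G W J) : OPCond G W (fun i => J (σ i)) := by
  obtain ⟨h1, h2, h3, h4, h5⟩ := h
  refine ⟨fun i => h1 _, fun i => h2 _,
    fun i j hij => h3 _ _ (fun e => hij (σ.injective e)), fun i => h4 _, fun v hv => ?_⟩
  obtain ⟨i, hi⟩ := h5 v hv
  exact ⟨σ.symm i, by simpa using hi⟩

/-- Index of the block containing `v0` (junk value if none). -/
noncomputable def blockIdx (v0 : V) {k : ℕ} (J : Fin (k+1) → Finset V) : Fin (k+1) :=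
  if h : ∃ i, v0 ∈ J i then h.choose else 0

lemma blockIdx_mem {v0 : V} {k : ℕ} {J : Fin (k+1) → Finset V} (h : ∃ i, v0 ∈ J i) :
    v0 ∈ J (blockIdx v0 J) := by
  rw [blockIdx, dif_pos h]
  exact h.choose_spec

lemma blockIdx_eq {v0 : V} {k : ℕ} {J : Fin (k+1) → Finset V}
    (hJ : OPCond G (Finset.univ : Finset V) J) {i : Fin (k+1)} (hi : v0 ∈ J i) :
    blockIdx v0 J = i := by
  have hex : ∃ j, v0 ∈ J j := ⟨i, hi⟩
  have hmem := blockIdx_mem hex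
  by_contra hne
  exact Finset.disjoint_left.mp (hJ.2.2.1 _ _ hne) hmem hi

/-- Number of ordered partitions with `v0` in the last block. -/
noncomputable def DD (v0 : V) (k : ℕ) : ℕ :=
  Nat.card {J : Fin (k+1) → Finset V //
    OPCond G (Finset.univ : Finset V) J ∧ v0 ∈ J (Fin.last k)}

lemma fiber_card (v0 : V) (k : ℕ) (c : Fin (k+1)) :
    Nat.card {J : Fin (k+1) → Finset V //
        OPCond G (Finset.univ : Finset V) J ∧ blockIdx v0 J = c}
      = DD G v0 k := by
  rw [DD]
  refine Nat.card_congr ⟨fun J => ⟨fun i => J.1 (Equiv.swap c (Fin.last k) i), ?_⟩,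
    fun J => ⟨fun i => J.1 (Equiv.swap c (Fin.last k) i), ?_⟩, ?_, ?_⟩
  · obtain ⟨J, hJ, hc⟩ := J
    refine ⟨OPCond_equiv G _ hJ, ?_⟩
    show v0 ∈ J (Equiv.swap c (Fin.last k) (Fin.last k))
    rw [Equiv.swap_apply_right, ← hc]
    exact blockIdx_mem (hJ.2.2.2.2 v0 (Finset.mem_univ v0))
  · obtain ⟨J, hJ, hlast⟩ := J
    refine ⟨OPCond_equiv G _ hJ, ?_⟩
    apply blockIdx_eq G (OPCond_equiv G _ hJ)
    show v0 ∈ J (Equiv.swap c (Fin.last k) c)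
    rw [Equiv.swap_apply_left]
    exact hlast
  · rintro ⟨J, hJ, hc⟩
    apply Subtype.ext
    funext i
    simp [Equiv.swap_apply_self]
  · rintro ⟨J, hJ, hlast⟩
    apply Subtype.ext
    funext i
    simp [Equiv.swap_apply_self]

lemma OP_univ_succ_eq (v0 : V) (k : ℕ) :
    OP G (Finset.univ : Finset V) (k + 1) = (k + 1) * DD G v0 k := by
  have h1 : OP G (Finset.univ : Finset V) (k+1)
      = (Finset.univ.filter (fun J : Fin (k+1) → Finset V =>
          OPCond G (Finset.univ : Finset V) J)).card := by
    rw [OP, Nat.card_eq_fintype_card, Fintype.card_subtype]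
  rw [h1, Finset.card_eq_sum_card_fiberwise
    (f := fun J : Fin (k+1) → Finset V => blockIdx v0 J)
    (t := (Finset.univ : Finset (Fin (k+1)))) (fun J _ => Finset.mem_univ _)]
  have h2 : ∀ c : Fin (k+1),
      ((Finset.univ.filter (fun J : Fin (k+1) → Finset V =>
          OPCond G (Finset.univ : Finset V) J)).filter
        (fun J => blockIdx v0 J = c)).card = DD G v0 k := by
    intro c
    rw [Finset.filter_filter, ← Fintype.card_subtype, ← Nat.card_eq_fintype_card]
    exact fiber_card G v0 k c
  rw [Finset.sum_congr rfl (fun c _ => h2 c)]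
  simp [Finset.card_univ, mul_comm]
lemma DD_decomp (v0 : V) (k : ℕ) :
    DD G v0 k = ∑ I ∈ (Finset.univ : Finset V).powerset.filter
        (fun I => I.Nonempty ∧ IndepSet G I ∧ v0 ∈ I),
      OP G ((Finset.univ : Finset V) \ I) k := by
  rw [DD, OP_lastBlock G (Finset.univ : Finset V) (fun I => v0 ∈ I) k]
  refine Finset.sum_congr ?_ (fun _ _ => rfl)
  apply Finset.ext
  intro I
  simp only [Finset.mem_filter]

/-- Number of acyclic orientations of `G` whose unique source is `v0`. -/
noncomputable def NN (v0 : V) : ℕ :=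
  Nat.card {D : Finset (V × V) // IsAO G (Finset.univ : Finset V) D ∧
    SrcSet (Finset.univ : Finset V) D = {v0}}

lemma int_main (hn : 1 ≤ Fintype.card V) (v0 : V) :
    ((-1 : ℤ) ^ (Fintype.card V)) * ∑ j ∈ Finset.range (Fintype.card V),
        (-1 : ℤ) ^ (j+1) * (DD G v0 j : ℤ) = (NN G v0 : ℤ) := by
  have hcard : (Finset.univ : Finset V).card = Fintype.card V := Finset.card_univ
  set n := Fintype.card V with hn_def
  set cands0 := (Finset.univ : Finset V).powerset.filter
      (fun I => I.Nonempty ∧ IndepSet G I ∧ v0 ∈ I) with hcands0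
  have hmemc : ∀ I ∈ cands0, I.Nonempty ∧ IndepSet G I ∧ v0 ∈ I := by
    intro I hI
    rw [hcands0, Finset.mem_filter] at hI
    exact hI.2
  have step1 : ∀ j ∈ Finset.range n, (-1 : ℤ) ^ (j+1) * (DD G v0 j : ℤ)
      = ∑ I ∈ cands0, (-1 : ℤ) ^ (j+1) * (OP G ((Finset.univ : Finset V) \ I) j : ℤ) := by
    intro j _
    rw [DD_decomp G v0 j]
    push_cast
    rw [Finset.mul_sum]
  rw [Finset.sum_congr rfl step1, Finset.sum_comm, Finset.mul_sum]
  have step2 : ∀ I ∈ cands0,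
      (-1 : ℤ) ^ n * ∑ j ∈ Finset.range n,
          (-1 : ℤ) ^ (j+1) * (OP G ((Finset.univ : Finset V) \ I) j : ℤ)
      = -(-1 : ℤ) ^ I.card * (aoCount G ((Finset.univ : Finset V) \ I) : ℤ) := by
    intro I hI
    obtain ⟨hne, hind, hv0I⟩ := hmemc I hI
    have hIC : 1 ≤ I.card := Finset.card_pos.mpr hne
    have hIn : I.card ≤ n := by rw [← hcard]; exact Finset.card_le_card (Finset.subset_univ I)
    have hsd : ((Finset.univ : Finset V) \ I).card = n - I.card := by
      rw [Finset.card_sdiff_of_subset (Finset.subset_univ I), hcard]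
    have inner : ∑ j ∈ Finset.range n,
        (-1 : ℤ) ^ (j+1) * (OP G ((Finset.univ : Finset V) \ I) j : ℤ)
        = -((-1 : ℤ) ^ (n - I.card) * gInt G ((Finset.univ : Finset V) \ I)) := by
      have hm : ((Finset.univ : Finset V) \ I).card ≤ n - 1 := by omega
      have hr : Finset.range n = Finset.range ((n - 1) + 1) := by congr 1; omega
      rw [hr, ← hsd, ← OP_sum_trunc G _ hm, ← Finset.sum_neg_distrib]
      refine Finset.sum_congr rfl fun j _ => ?_
      rw [pow_succ]
      ring
    rw [inner, gInt_eq_aoCount]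
    have hsplit : (-1 : ℤ) ^ n = (-1) ^ (n - I.card) * (-1) ^ I.card := by
      rw [← pow_add, Nat.sub_add_cancel hIn]
    rw [hsplit]
    have hsq : ((-1 : ℤ) ^ (n - I.card)) * ((-1) ^ (n - I.card)) = 1 := by
      rw [← pow_add]; exact Even.neg_one_pow ⟨n - I.card, rfl⟩
    linear_combination (-((-1 : ℤ) ^ I.card) *
      (aoCount G ((Finset.univ : Finset V) \ I) : ℤ)) * hsq
  rw [Finset.sum_congr rfl step2]
  have step3 : ∀ I ∈ cands0,
      -(-1 : ℤ) ^ I.card * (aoCount G ((Finset.univ : Finset V) \ I) : ℤ)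
      = ∑ D ∈ Finset.univ.filter (IsAO G (Finset.univ : Finset V)),
          (if I ⊆ SrcSet (Finset.univ : Finset V) D then -(-1 : ℤ) ^ I.card else 0) := by
    intro I hI
    obtain ⟨hne, hind, hv0I⟩ := hmemc I hI
    rw [← AO_restrict G (Finset.univ : Finset V) I (Finset.subset_univ I) hind,
      nat_card_subtype_filter, Finset.card_filter, Finset.sum_filter]
    push_cast
    rw [Finset.mul_sum]
    refine Finset.sum_congr rfl fun D _ => ?_
    by_cases h1 : IsAO G (Finset.univ : Finset V) D <;>
      by_cases h2 : I ⊆ SrcSet (Finset.univ : Finset V) D <;> simp [h1, h2]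
  rw [Finset.sum_congr rfl step3, Finset.sum_comm]
  have step4 : ∀ D ∈ Finset.univ.filter (IsAO G (Finset.univ : Finset V)),
      ∑ I ∈ cands0,
          (if I ⊆ SrcSet (Finset.univ : Finset V) D then -(-1 : ℤ) ^ I.card else 0)
      = if SrcSet (Finset.univ : Finset V) D = {v0} then 1 else 0 := by
    intro D hD
    have hAO : IsAO G (Finset.univ : Finset V) D := (Finset.mem_filter.mp hD).2
    rw [← Finset.sum_filter]
    have hset : cands0.filter (fun I => I ⊆ SrcSet (Finset.univ : Finset V) D)
        = (SrcSet (Finset.univ : Finset V) D).powerset.filter (fun I => v0 ∈ I) := by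
      apply Finset.ext
      intro I
      rw [hcands0]
      simp only [Finset.mem_filter, Finset.mem_powerset]
      constructor
      · rintro ⟨⟨_, _, _, hv0I⟩, hsub⟩
        exact ⟨hsub, hv0I⟩
      · rintro ⟨hsub, hv0I⟩
        exact ⟨⟨Finset.subset_univ I, ⟨v0, hv0I⟩,
          indepSet_subset G (srcSet_indep G hAO) hsub, hv0I⟩, hsub⟩
    rw [hset]
    exact sum_v0_powerset _ v0
  rw [Finset.sum_congr rfl step4]
  have step5 : (NN G v0 : ℤ)
      = ∑ D ∈ Finset.univ.filter (IsAO G (Finset.univ : Finset V)),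
          (if SrcSet (Finset.univ : Finset V) D = {v0} then (1 : ℤ) else 0) := by
    rw [NN, nat_card_subtype_filter, Finset.card_filter, Finset.sum_filter]
    push_cast
    refine Finset.sum_congr rfl fun D _ => ?_
    by_cases h1 : IsAO G (Finset.univ : Finset V) D <;>
      by_cases h2 : SrcSet (Finset.univ : Finset V) D = {v0} <;> simp [h1, h2]
  rw [step5]
lemma no_src_of_not_connected (h : ¬ G.Connected) [Nonempty V] (v0 : V)
    {D : Finset (V × V)} (hD : IsAO G (Finset.univ : Finset V) D) :
    SrcSet (Finset.univ : Finset V) D ≠ {v0} := by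
  have hpre : ¬ G.Preconnected := fun hp => h ⟨hp⟩
  rw [SimpleGraph.Preconnected] at hpre
  push_neg at hpre
  obtain ⟨u, w, huw⟩ := hpre
  have hw' : ∃ w', ¬ G.Reachable v0 w' := by
    by_cases hu : G.Reachable v0 u
    · exact ⟨w, fun hr => huw (hu.symm.trans hr)⟩
    · exact ⟨u, hu⟩
  obtain ⟨w', hw'⟩ := hw'
  set S := Finset.univ.filter (fun x => G.Reachable w' x) with hS
  have hSne : S.Nonempty := ⟨w', by
    rw [hS, Finset.mem_filter]
    exact ⟨Finset.mem_univ w', SimpleGraph.Reachable.refl w'⟩⟩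
  obtain ⟨v, hvS, hnod⟩ := hD.2.2 S (Finset.subset_univ S) hSne
  have hvreach : G.Reachable w' v := by
    rw [hS, Finset.mem_filter] at hvS
    exact hvS.2
  have hvsrc : v ∈ SrcSet (Finset.univ : Finset V) D := by
    rw [SrcSet, Finset.mem_filter]
    refine ⟨Finset.mem_univ v, fun u' hu' => ?_⟩
    have hadj : G.Adj u' v := (hD.1 _ hu').2.2
    have : u' ∈ S := by
      rw [hS, Finset.mem_filter]
      exact ⟨Finset.mem_univ u', hvreach.trans hadj.symm.reachable⟩
    exact hnod u' this hu'
  intro heq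
  rw [heq, Finset.mem_singleton] at hvsrc
  subst hvsrc
  exact hw' hvreach.symm

lemma exists_src_of_connected (hconn : G.Connected) (v0 : V) :
    ∃ D : Finset (V × V), IsAO G (Finset.univ : Finset V) D ∧
      SrcSet (Finset.univ : Finset V) D = {v0} := by
  classical
  set n := Fintype.card V with hn_def
  set e := Fintype.equivFin V with he
  set key : V → ℕ := fun v => n * G.dist v0 v + (e v : ℕ) with hkey
  have hkey_lt : ∀ v, (e v : ℕ) < n := fun v => (e v).2
  have hkey_def : ∀ v, key v = n * G.dist v0 v + (e v : ℕ) := fun v => rfl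
  have hkey_mono : ∀ u v, G.dist v0 u < G.dist v0 v → key u < key v := by
    intro u v hlt
    rw [hkey_def, hkey_def]
    calc n * G.dist v0 u + (e u : ℕ) < n * G.dist v0 u + n := by
          have := hkey_lt u; omega
      _ = n * (G.dist v0 u + 1) := by ring
      _ ≤ n * G.dist v0 v := Nat.mul_le_mul_left n hlt
      _ ≤ n * G.dist v0 v + (e v : ℕ) := Nat.le_add_right _ _
  have hkey_inj : Function.Injective key := by
    intro u v huv
    rcases lt_trichotomy (G.dist v0 u) (G.dist v0 v) with h | h | h
    · exact absurd huv (hkey_mono u v h).ne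
    · apply e.injective
      apply Fin.ext
      rw [hkey_def, hkey_def, h] at huv
      exact Nat.add_left_cancel huv
    · exact absurd huv (hkey_mono v u h).ne'
  set D := Finset.univ.filter (fun p : V × V => G.Adj p.1 p.2 ∧ key p.1 < key p.2) with hD
  have hmemD : ∀ p : V × V, p ∈ D ↔ G.Adj p.1 p.2 ∧ key p.1 < key p.2 := by
    intro p; rw [hD]; simp
  refine ⟨D, ⟨?_, ?_, ?_⟩, ?_⟩
  · intro p hp
    exact ⟨Finset.mem_univ _, Finset.mem_univ _, ((hmemD p).mp hp).1⟩
  · intro u v _ _ hadj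
    rw [hmemD (u, v), hmemD (v, u)]
    have hne : key u ≠ key v := fun h => hadj.ne (hkey_inj h)
    simp only [hadj, hadj.symm, true_and]
    omega
  · intro S _ hSne
    obtain ⟨v, hvS, hmin⟩ := Finset.exists_min_image S key hSne
    refine ⟨v, hvS, fun u huS hmem => ?_⟩
    have h1 : G.Adj u v ∧ key u < key v := (hmemD (u, v)).mp hmem
    have h2 := hmin u huS
    omega
  · rw [Finset.eq_singleton_iff_unique_mem]
    constructor
    · rw [SrcSet, Finset.mem_filter]
      refine ⟨Finset.mem_univ v0, fun u hmem => ?_⟩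
      have h1 : G.Adj u v0 ∧ key u < key v0 := (hmemD (u, v0)).mp hmem
      have hne : v0 ≠ u := fun h => h1.1.ne (h.symm)
      have hdupos : 0 < G.dist v0 u := (hconn.preconnected v0 u).pos_dist_of_ne hne
      have ha := hkey_def u
      have hb := hkey_def v0
      rw [SimpleGraph.dist_self] at hb
      have hl : n * 1 ≤ n * G.dist v0 u := Nat.mul_le_mul_left n hdupos
      have hv0lt := hkey_lt v0
      have h12 := h1.2
      omega
    · intro x hx
      rw [SrcSet, Finset.mem_filter] at hx
      by_contra hne
      have hreach : G.Reachable v0 x := hconn.preconnected v0 x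
      have hdpos : 0 < G.dist v0 x := hreach.pos_dist_of_ne (Ne.symm hne)
      obtain ⟨p, hp⟩ := hreach.exists_walk_length_eq_dist
      have hrl : p.reverse.length = G.dist v0 x := by
        rw [SimpleGraph.Walk.length_reverse]; exact hp
      cases hrev : p.reverse with
      | nil =>
        rw [hrev] at hrl
        simp only [SimpleGraph.Walk.length_nil] at hrl
        omega
      | cons hadj q =>
        rename_i y
        have hyd : G.dist v0 y < G.dist v0 x := by
          have hq : G.dist v0 y ≤ q.length := by
            rw [SimpleGraph.dist_comm]
            exact SimpleGraph.dist_le q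
          have hql : q.length + 1 = G.dist v0 x := by
            rw [← hrl, hrev]
            simp
          omega
        have hkeylt : key y < key x := hkey_mono y x hyd
        exact hx.2 y ((hmemD (y, x)).mpr ⟨hadj.symm, hkeylt⟩)

lemma opc_eq (k : ℕ) : orderedPartCount G k = OP G (Finset.univ : Finset V) k := by
  rw [orderedPartCount, OP]
  apply Nat.card_congr (Equiv.subtypeEquivRight _)
  intro J
  constructor
  · rintro ⟨h1, h2, h3, h4⟩
    exact ⟨h1, h2, h3, fun i => Finset.subset_univ _, fun v _ => h4 v⟩
  · rintro ⟨h1, h2, h3, _, h5⟩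
    exact ⟨h1, h2, h3, fun v => h5 v (Finset.mem_univ v)⟩

lemma sum_reindex (f : ℕ → ℚ) (n : ℕ) :
    ∑ k ∈ Finset.Icc 1 n, f k = ∑ j ∈ Finset.range n, f (j+1) := by
  apply Finset.sum_nbij' (fun k => k - 1) (fun j => j + 1)
  · intro k hk; rw [Finset.mem_Icc] at hk; rw [Finset.mem_range]; omega
  · intro j hj; rw [Finset.mem_range] at hj; rw [Finset.mem_Icc]; omega
  · intro k hk; rw [Finset.mem_Icc] at hk; omega
  · intro j _; omega
  · intro k hk; rw [Finset.mem_Icc] at hk; congr 1; omega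

lemma cNum_eq_NN (hn : 1 ≤ Fintype.card V) (v0 : V) : cNum G = (NN G v0 : ℚ) := by
  have h1 : cNum G = (-1 : ℚ) ^ (Fintype.card V) *
      ∑ j ∈ Finset.range (Fintype.card V), (-1 : ℚ) ^ (j+1) * (DD G v0 j : ℚ) := by
    rw [cNum, sum_reindex]
    congr 1
    refine Finset.sum_congr rfl fun j _ => ?_
    rw [opc_eq, OP_univ_succ_eq G v0 j]
    have hj : ((j : ℚ) + 1) ≠ 0 := by positivity
    push_cast
    field_simp
  rw [h1, show ((NN G v0 : ℚ)) = (((NN G v0 : ℤ) : ℚ)) from by push_cast; rfl,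
    ← int_main G hn v0]
  push_cast
  ring

end CProof

theorem stmt_1 {V : Type*} [Fintype V] (G : SimpleGraph V) (hn : 1 ≤ Fintype.card V) :
    0 < cNum G ↔ G.Connected := by
  classical
  have hne : Nonempty V := Fintype.card_pos_iff.mp hn
  obtain ⟨v0⟩ := hne
  have hne' : Nonempty V := ⟨v0⟩
  have hkey := CProof.cNum_eq_NN G hn v0
  constructor
  · intro hpos
    by_contra hconn
    have hempty : IsEmpty {D : Finset (V × V) //
        CProof.IsAO G (Finset.univ : Finset V) D ∧
        CProof.SrcSet (Finset.univ : Finset V) D = {v0}} := by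
      constructor
      rintro ⟨D, hD, hsrc⟩
      exact CProof.no_src_of_not_connected G hconn v0 hD hsrc
    rw [hkey, CProof.NN, Nat.card_of_isEmpty] at hpos
    norm_num at hpos
  · intro hconn
    obtain ⟨D, hD, hsrc⟩ := CProof.exists_src_of_connected G hconn v0
    have hne2 : Nonempty {D : Finset (V × V) //
        CProof.IsAO G (Finset.univ : Finset V) D ∧
        CProof.SrcSet (Finset.univ : Finset V) D = {v0}} := ⟨⟨D, hD, hsrc⟩⟩
    have hpos : 0 < CProof.NN G v0 := by
      rw [CProof.NN]; exact Nat.card_pos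
    rw [hkey]
    exact_mod_cast hpos
end

section
/- Let G be a finite simple graph with at least one vertex. The coefficient of x^1 in the chromatic polynomial P(G,x) is nonzero if and only if G is connected. -/
/-- The number of proper colorings of `G` with a palette of `x` colors. -/
noncomputable def properColoringCount {V : Type*} [Fintype V] (G : SimpleGraph V) (x : ℕ) : ℕ :=
  Nat.card {f : V → Fin x // ∀ v w, G.Adj v w → f v ≠ f w}

section Aux
set_option linter.unusedSectionVars false
set_option linter.unusedVariables false

open SimpleGraph Finset Polynomial

variable {V : Type*} [Fintype V] [DecidableEq V]

private def gr (A : Finset (Sym2 V)) : SimpleGraph V := SimpleGraph.fromEdgeSet ↑A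

private lemma gr_adj {A : Finset (Sym2 V)} {v w : V} :
    (gr A).Adj v w ↔ s(v, w) ∈ A ∧ v ≠ w := by
  simp [gr, SimpleGraph.fromEdgeSet_adj]

private noncomputable def cc (A : Finset (Sym2 V)) : ℕ := Nat.card ((gr A).ConnectedComponent)

private def mchr {α : Type*} (f : V → α) : Sym2 V → Prop :=
  Sym2.lift ⟨fun a b => f a = f b, fun a b => propext ⟨Eq.symm, Eq.symm⟩⟩

private noncomputable def chrP (G : SimpleGraph V) [Fintype G.edgeSet] : Polynomial ℚ :=
  ∑ A ∈ G.edgeFinset.powerset, (-1 : ℚ) ^ A.card • (Polynomial.X ^ cc A)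

private lemma count_const_on_components (A : Finset (Sym2 V)) (x : ℕ) :
    Nat.card {f : V → Fin x // ∀ v w, (gr A).Adj v w → f v = f w} = x ^ cc A := by
  have e : {f : V → Fin x // ∀ v w, (gr A).Adj v w → f v = f w} ≃
      ((gr A).ConnectedComponent → Fin x) := by
    refine
      { toFun := fun f => ConnectedComponent.lift f.1 ?_
        invFun := fun g => ⟨g ∘ (gr A).connectedComponentMk, fun v w h => ?_⟩
        left_inv := fun f => ?_
        right_inv := fun g => ?_ }
    · intro v w p _
      have : ∀ {a b : V} (q : (gr A).Walk a b), f.1 a = f.1 b := by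
        intro a b q
        induction q with
        | nil => rfl
        | cons h q ih => exact (f.2 _ _ h).trans ih
      exact this p
    · exact congrArg g (SimpleGraph.ConnectedComponent.connectedComponentMk_eq_of_adj h)
    · ext v; rfl
    · ext c
      induction c using SimpleGraph.ConnectedComponent.ind
      rfl
  rw [Nat.card_congr e, Nat.card_fun, Nat.card_eq_fintype_card (α := Fin x), Fintype.card_fin, cc]

private lemma sum_powerset_neg_one_q (s : Finset (Sym2 V)) :
    (∑ m ∈ s.powerset, (-1 : ℚ) ^ m.card) = if s = ∅ then 1 else 0 := by
  have h := Finset.sum_powerset_neg_one_pow_card (x := s)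
  have : (∑ m ∈ s.powerset, (-1 : ℚ) ^ m.card) = ((∑ m ∈ s.powerset, (-1 : ℤ) ^ m.card : ℤ) : ℚ) := by
    push_cast; rfl
  rw [this, h]
  split <;> simp

private lemma chrP_eval (G : SimpleGraph V) [Fintype G.edgeSet] (x : ℕ) :
    (chrP G).eval (x : ℚ) = (properColoringCount G x : ℚ) := by
  classical
  set Bad : (V → Fin x) → Finset (Sym2 V) := fun f => G.edgeFinset.filter (mchr f) with hBad
  have hsub : ∀ f, Bad f ⊆ G.edgeFinset := fun f => filter_subset _ _
  -- step 1
  have h1 : (chrP G).eval (x : ℚ) =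
      ∑ A ∈ G.edgeFinset.powerset, (-1 : ℚ) ^ A.card * (x : ℚ) ^ cc A := by
    simp [chrP, eval_finset_sum, smul_eq_mul]
  -- step 2 : counting
  have h2 : ∀ A ∈ G.edgeFinset.powerset,
      ((x : ℚ)) ^ cc A = (((univ.filter fun f : V → Fin x => A ⊆ Bad f).card : ℕ) : ℚ) := by
    intro A hA
    rw [mem_powerset] at hA
    have hiff : ∀ f : V → Fin x, (A ⊆ Bad f) ↔ (∀ v w, (gr A).Adj v w → f v = f w) := by
      intro f
      constructor
      · intro h v w hvw
        rw [gr_adj] at hvw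
        exact (mem_filter.mp (h hvw.1)).2
      · intro h e he
        rw [hBad, mem_filter]
        refine ⟨hA he, ?_⟩
        induction e using Sym2.ind with
        | _ a b =>
          by_cases hab : a = b
          · subst hab; exact rfl
          · exact h a b (gr_adj.mpr ⟨he, hab⟩)
    have hcount : x ^ cc A = (univ.filter fun f : V → Fin x => A ⊆ Bad f).card := by
      rw [← count_const_on_components A x, Nat.card_eq_fintype_card, Fintype.card_subtype]
      congr 1
      apply Finset.filter_congr
      intro f _
      rw [hiff f]
    exact_mod_cast congrArg (Nat.cast : ℕ → ℚ) hcount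
  -- step 3-4-5
  have h3 : ∑ A ∈ G.edgeFinset.powerset, (-1 : ℚ) ^ A.card * (x : ℚ) ^ cc A
      = ∑ f : V → Fin x, (if Bad f = ∅ then (1:ℚ) else 0) := by
    calc ∑ A ∈ G.edgeFinset.powerset, (-1 : ℚ) ^ A.card * (x : ℚ) ^ cc A
        = ∑ A ∈ G.edgeFinset.powerset, ∑ f : V → Fin x,
            (if A ⊆ Bad f then (-1 : ℚ) ^ A.card else 0) := by
          refine Finset.sum_congr rfl fun A hA => ?_
          rw [h2 A hA, ← Finset.sum_filter]
          simp [Finset.sum_const, mul_comm]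
      _ = ∑ f : V → Fin x, ∑ A ∈ G.edgeFinset.powerset,
            (if A ⊆ Bad f then (-1 : ℚ) ^ A.card else 0) := Finset.sum_comm
      _ = ∑ f : V → Fin x, (if Bad f = ∅ then (1:ℚ) else 0) := by
          refine Finset.sum_congr rfl fun f _ => ?_
          rw [← Finset.sum_filter]
          have : G.edgeFinset.powerset.filter (· ⊆ Bad f) = (Bad f).powerset := by
            ext a
            simp only [mem_filter, mem_powerset]
            exact ⟨fun h => h.2, fun h => ⟨h.trans (hsub f), h⟩⟩
          rw [this, sum_powerset_neg_one_q]
  -- step 6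
  have h6 : ∑ f : V → Fin x, (if Bad f = ∅ then (1:ℚ) else 0)
      = (properColoringCount G x : ℚ) := by
    rw [← Finset.sum_filter]
    have : (properColoringCount G x) = (univ.filter fun f : V → Fin x => Bad f = ∅).card := by
      rw [properColoringCount, Nat.card_eq_fintype_card, Fintype.card_subtype]
      congr 1
      apply Finset.filter_congr
      intro f _
      simp only [hBad, Finset.filter_eq_empty_iff, SimpleGraph.mem_edgeFinset]
      constructor
      · intro h e he
        revert he
        induction e using Sym2.ind with
        | _ a b => exact fun he hm => h a b he hm
      · intro h v w hvw hm
        exact h ((SimpleGraph.mem_edgeSet G).mpr hvw) hm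
    rw [this]
    simp
  rw [h1, h3, h6]
private lemma gr_le (G : SimpleGraph V) [Fintype G.edgeSet] {A : Finset (Sym2 V)}
    (hA : A ⊆ G.edgeFinset) : gr A ≤ G := by
  intro v w hvw
  rw [gr_adj] at hvw
  exact (SimpleGraph.mem_edgeSet G).mp (SimpleGraph.mem_edgeFinset.mp (hA hvw.1))

private lemma P_eq_chrP (G : SimpleGraph V) [Fintype G.edgeSet] (P : Polynomial ℚ)
    (hP : ∀ x : ℕ, P.eval (x : ℚ) = (properColoringCount G x : ℚ)) : P = chrP G := by
  apply Polynomial.eq_of_infinite_eval_eq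
  apply Set.infinite_of_injective_forall_mem (f := fun n : ℕ => (n : ℚ)) Nat.cast_injective
  intro n
  simp only [Set.mem_setOf_eq]
  rw [hP n, chrP_eval]

private lemma chrP_coeff (G : SimpleGraph V) [Fintype G.edgeSet] :
    (chrP G).coeff 1 =
      ∑ A ∈ G.edgeFinset.powerset.filter (fun A => cc A = 1), (-1 : ℚ) ^ A.card := by
  classical
  rw [chrP, Polynomial.finset_sum_coeff, Finset.sum_filter]
  refine Finset.sum_congr rfl fun A _ => ?_
  rw [Polynomial.coeff_smul, Polynomial.coeff_X_pow, smul_eq_mul]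
  by_cases h : cc A = 1 <;> simp [h, eq_comm]

private lemma cc_eq_one_iff [Nonempty V] (A : Finset (Sym2 V)) :
    cc A = 1 ↔ (gr A).Connected := by
  rw [cc, Nat.card_eq_one_iff_unique]
  constructor
  · rintro ⟨hs, -⟩
    rw [SimpleGraph.connected_iff]
    refine ⟨fun u v => ?_, ‹_›⟩
    exact SimpleGraph.ConnectedComponent.exact (Subsingleton.elim _ _)
  · intro h
    refine ⟨⟨fun c d => ?_⟩, ⟨(gr A).connectedComponentMk (Classical.arbitrary V)⟩⟩
    induction c using SimpleGraph.ConnectedComponent.ind with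
    | _ v =>
    induction d using SimpleGraph.ConnectedComponent.ind with
    | _ w =>
    exact SimpleGraph.ConnectedComponent.sound (h.preconnected v w)

private lemma coeff_eq_zero_of_not_connected (G : SimpleGraph V) [Fintype G.edgeSet]
    [Nonempty V] (h : ¬G.Connected) : (chrP G).coeff 1 = 0 := by
  classical
  rw [chrP_coeff]
  convert Finset.sum_empty
  rw [Finset.filter_eq_empty_iff]
  intro A hA hcc
  rw [Finset.mem_powerset] at hA
  exact h (((cc_eq_one_iff A).mp hcc).mono (gr_le G hA))
/-! ### The φ (greedy spanning forest) machinery -/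

private def sconn (B : Finset (Sym2 V)) : Sym2 V → Prop :=
  Sym2.lift ⟨fun a b => (gr B).Reachable a b,
    fun a b => propext ⟨SimpleGraph.Reachable.symm, SimpleGraph.Reachable.symm⟩⟩

private lemma sconn_mk {B : Finset (Sym2 V)} {a b : V} :
    sconn B s(a, b) ↔ (gr B).Reachable a b := Iff.rfl

private lemma gr_mono {A B : Finset (Sym2 V)} (h : A ⊆ B) : gr A ≤ gr B := by
  intro v w hvw
  rw [gr_adj] at hvw ⊢
  exact ⟨h hvw.1, hvw.2⟩

private lemma sconn_mono {B C : Finset (Sym2 V)} (h : B ⊆ C) {e : Sym2 V}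
    (he : sconn B e) : sconn C e := by
  induction e using Sym2.ind with
  | _ a b => exact (sconn_mk.mp he).mono (gr_mono h)

private lemma sconn_of_mem {C : Finset (Sym2 V)} {e : Sym2 V} (he : e ∈ C)
    (hd : ¬e.IsDiag) : sconn C e := by
  induction e using Sym2.ind with
  | _ a b =>
    rw [Sym2.mk_isDiag_iff] at hd
    exact sconn_mk.mpr (gr_adj.mpr ⟨he, hd⟩).reachable

private lemma reach_trans_of_edges {B C : Finset (Sym2 V)} {a b : V}
    (h : (gr B).Reachable a b) (hf : ∀ f ∈ B, sconn C f) : (gr C).Reachable a b := by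
  obtain ⟨p⟩ := h
  induction p with
  | nil => exact SimpleGraph.Reachable.refl _
  | cons hadj p ih =>
    have h1 : sconn C s(_, _) := hf _ (gr_adj.mp hadj).1
    exact (sconn_mk.mp h1).trans ih

private lemma sconn_trans {B C : Finset (Sym2 V)} {e : Sym2 V} (h : sconn B e)
    (hf : ∀ f ∈ B, sconn C f) : sconn C e := by
  induction e using Sym2.ind with
  | _ a b => exact reach_trans_of_edges (sconn_mk.mp h) hf

/-- the edges of `A` strictly above `e` in the order `enc`. -/
private def res (enc : Sym2 V → ℕ) (A : Finset (Sym2 V)) (e : Sym2 V) : Finset (Sym2 V) :=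
  A.filter (fun f => enc e < enc f)

open Classical in
/-- greedy maximal spanning forest of `A` w.r.t. `enc` -/
private noncomputable def phi (enc : Sym2 V → ℕ) (A : Finset (Sym2 V)) : Finset (Sym2 V) :=
  A.filter (fun e => ¬ sconn (res enc A e) e)

open Classical in
/-- externally active edges w.r.t. a forest `T` -/
private noncomputable def DD (enc : Sym2 V → ℕ) (E T : Finset (Sym2 V)) : Finset (Sym2 V) :=
  E.filter (fun e => e ∉ T ∧ sconn (res enc T e) e)

private lemma phi_subset (enc : Sym2 V → ℕ) (A : Finset (Sym2 V)) : phi enc A ⊆ A := by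
  classical exact Finset.filter_subset _ _

private lemma res_mono_left {enc : Sym2 V → ℕ} {A B : Finset (Sym2 V)} (h : A ⊆ B) (e : Sym2 V) :
    res enc A e ⊆ res enc B e := Finset.filter_subset_filter _ h

private lemma res_anti {enc : Sym2 V → ℕ} {A : Finset (Sym2 V)} {e f : Sym2 V}
    (h : enc e < enc f) : res enc A f ⊆ res enc A e := by
  intro g hg
  rw [res, Finset.mem_filter] at hg ⊢
  exact ⟨hg.1, h.trans hg.2⟩

private lemma res_card_lt {enc : Sym2 V → ℕ} {A : Finset (Sym2 V)} {e f : Sym2 V}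
    (hf : f ∈ res enc A e) : (res enc A f).card < (res enc A e).card := by
  rw [res, Finset.mem_filter] at hf
  apply Finset.card_lt_card
  refine ⟨res_anti hf.2, fun hsub => ?_⟩
  have := hsub (Finset.mem_filter.mpr ⟨hf.1, hf.2⟩)
  rw [res, Finset.mem_filter] at this
  exact lt_irrefl _ this.2

/-- every edge of `A` has its endpoints connected in `phi enc A` -/
private lemma sconn_phi (enc : Sym2 V → ℕ) (A : Finset (Sym2 V))
    (hd : ∀ e ∈ A, ¬e.IsDiag) : ∀ e ∈ A, sconn (phi enc A) e := by
  classical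
  intro e he
  generalize hμ : (res enc A e).card = n
  induction n using Nat.strong_induction_on generalizing e with
  | _ n ih =>
  subst hμ
  by_cases hp : e ∈ phi enc A
  · exact sconn_of_mem hp (hd e he)
  · have hs : sconn (res enc A e) e := by
      by_contra hc
      exact hp (Finset.mem_filter.mpr ⟨he, hc⟩)
    refine sconn_trans hs fun f hf => ?_
    have hfA : f ∈ A := (Finset.filter_subset _ _) hf
    exact ih _ (res_card_lt hf) f hfA rfl

/-- `phi enc A` is a fixed point of the `res`-condition -/
private lemma phi_fixed (enc : Sym2 V → ℕ) (A : Finset (Sym2 V)) :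
    ∀ e ∈ phi enc A, ¬ sconn (res enc (phi enc A) e) e := by
  classical
  intro e he hs
  rw [phi, Finset.mem_filter] at he
  exact he.2 (sconn_mono (res_mono_left (phi_subset enc A) e) hs)

/-- edges outside the forest are externally active (forward fiber description) -/
private lemma sconn_res_phi (enc : Sym2 V → ℕ) (A : Finset (Sym2 V))
    (hd : ∀ e ∈ A, ¬e.IsDiag) :
    ∀ e ∈ A, e ∉ phi enc A → sconn (res enc (phi enc A) e) e := by
  classical
  intro e he hnp
  generalize hμ : (res enc A e).card = n
  induction n using Nat.strong_induction_on generalizing e with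
  | _ n ih =>
  subst hμ
  have hs : sconn (res enc A e) e := by
    by_contra hc
    exact hnp (Finset.mem_filter.mpr ⟨he, hc⟩)
  refine sconn_trans hs fun f hf => ?_
  have hfA : f ∈ A := (Finset.filter_subset _ _) hf
  have hef : enc e < enc f := (Finset.mem_filter.mp hf).2
  by_cases hfp : f ∈ phi enc A
  · refine sconn_of_mem ?_ (hd f hfA)
    rw [res, Finset.mem_filter]
    exact ⟨hfp, hef⟩
  · exact sconn_mono (res_anti hef) (ih _ (res_card_lt hf) f hfA hfp rfl)

/-- backward fiber description -/
private lemma phi_union (enc : Sym2 V → ℕ) (T S : Finset (Sym2 V))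
    (hdT : ∀ e ∈ T, ¬e.IsDiag)
    (hfix : ∀ e ∈ T, ¬ sconn (res enc T e) e)
    (hS : ∀ e ∈ S, e ∉ T ∧ sconn (res enc T e) e) :
    phi enc (T ∪ S) = T := by
  classical
  ext e
  constructor
  · intro he
    rw [phi, Finset.mem_filter, Finset.mem_union] at he
    obtain ⟨hTS, hns⟩ := he
    rcases hTS with hT | hSe
    · exact hT
    · exact absurd (sconn_mono (res_mono_left Finset.subset_union_left e) ((hS e hSe).2)) hns
  · intro he
    rw [phi, Finset.mem_filter, Finset.mem_union]
    refine ⟨Or.inl he, fun hs => ?_⟩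
    refine hfix e he (sconn_trans hs fun f hf => ?_)
    rw [res, Finset.mem_filter, Finset.mem_union] at hf
    obtain ⟨hfTS, hef⟩ := hf
    rcases hfTS with hfT | hfS
    · exact sconn_of_mem (Finset.mem_filter.mpr ⟨hfT, hef⟩) (hdT f hfT)
    · exact sconn_mono (res_anti hef) (hS f hfS).2
private lemma mem_edgeSet_gr {T : Finset (Sym2 V)} {e : Sym2 V} :
    e ∈ (gr T).edgeSet ↔ e ∈ T ∧ ¬e.IsDiag := by
  rw [gr, SimpleGraph.edgeSet_fromEdgeSet]
  simp

private lemma edges_ne_nil_of_ne {G' : SimpleGraph V} {a b : V} (hab : a ≠ b)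
    (p : G'.Walk a b) : p.edges ≠ [] := by
  cases p with
  | nil => exact absurd rfl hab
  | cons h q => simp

private lemma isTree_of_fixed (enc : Sym2 V → ℕ) (hinj : Function.Injective enc)
    (T : Finset (Sym2 V)) (hd : ∀ e ∈ T, ¬e.IsDiag)
    (hconn : (gr T).Connected)
    (hfix : ∀ e ∈ T, ¬ sconn (res enc T e) e) : (gr T).IsTree := by
  classical
  rw [SimpleGraph.isTree_iff]
  refine ⟨hconn, ?_⟩
  intro v c hc
  have hce : ∀ f ∈ c.edges, f ∈ T := fun f hf =>
    (mem_edgeSet_gr.mp (c.edges_subset_edgeSet hf)).1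
  have hcd : ∀ f ∈ c.edges, ¬f.IsDiag := fun f hf =>
    (mem_edgeSet_gr.mp (c.edges_subset_edgeSet hf)).2
  have hne0 : c.edges ≠ [] := by
    rcases c with _ | ⟨h, q⟩
    · exact absurd rfl hc.ne_nil
    · simp
  obtain ⟨f0, hf0⟩ := List.exists_mem_of_ne_nil _ hne0
  have hne : c.edges.toFinset.Nonempty := ⟨f0, List.mem_toFinset.mpr hf0⟩
  obtain ⟨e, heme, hemin⟩ := Finset.exists_min_image c.edges.toFinset enc hne
  rw [List.mem_toFinset] at heme
  have hHe : ∀ f ∈ c.edges, f ∈ (gr c.edges.toFinset).edgeSet := fun f hf =>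
    mem_edgeSet_gr.mpr ⟨List.mem_toFinset.mpr hf, hcd f hf⟩
  have hc' : (c.transfer (gr c.edges.toFinset) hHe).IsCycle := hc.transfer _
  revert heme hemin
  induction e using Sym2.ind with
  | _ a b =>
  intro heme hemin
  have hH : (gr c.edges.toFinset).Adj a b ∧
      ((gr c.edges.toFinset) \ SimpleGraph.fromEdgeSet {s(a, b)}).Reachable a b := by
    show (gr c.edges.toFinset).Adj a b ∧ ((gr c.edges.toFinset).deleteEdges {s(a, b)}).Reachable a b
    rw [SimpleGraph.adj_and_reachable_delete_edges_iff_exists_cycle]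
    exact ⟨v, _, hc', by rw [SimpleGraph.Walk.edges_transfer]; exact heme⟩
  have hle : (gr c.edges.toFinset) \ SimpleGraph.fromEdgeSet {s(a, b)} ≤
      gr (res enc T s(a, b)) := by
    intro x y hxy
    rw [SimpleGraph.sdiff_adj] at hxy
    obtain ⟨hx1, hx2⟩ := hxy
    rw [gr_adj] at hx1 ⊢
    refine ⟨?_, hx1.2⟩
    rw [res, Finset.mem_filter]
    have hxc : s(x, y) ∈ c.edges := List.mem_toFinset.mp hx1.1
    refine ⟨hce _ hxc, ?_⟩
    have hne' : s(a, b) ≠ s(x, y) := by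
      intro hEq
      apply hx2
      rw [SimpleGraph.fromEdgeSet_adj]
      exact ⟨by rw [← hEq]; exact rfl, hx1.2⟩
    exact lt_of_le_of_ne (hemin _ (List.mem_toFinset.mpr hxc)) (fun h => hne' (hinj h))
  exact hfix _ (hce _ heme) (sconn_mk.mpr (hH.2.mono hle))

private lemma tree_fixed (T : Finset (Sym2 V)) (hd : ∀ e ∈ T, ¬e.IsDiag)
    (ht : (gr T).IsTree) :
    ∀ e ∈ T, ∀ B ⊆ T.erase e, ¬ sconn B e := by
  classical
  intro e heT
  revert heT
  induction e using Sym2.ind with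
  | _ a b =>
  intro heT B hB hs
  have hab : a ≠ b := by
    have := hd _ heT
    rwa [Sym2.mk_isDiag_iff] at this
  have hadj : (gr T).Adj a b := gr_adj.mpr ⟨heT, hab⟩
  have hbridge := (SimpleGraph.isAcyclic_iff_forall_adj_isBridge.mp
    ((SimpleGraph.isTree_iff _).mp ht).2) hadj
  rw [SimpleGraph.isBridge_iff] at hbridge
  apply hbridge
  refine (sconn_mk.mp hs).mono ?_
  intro x y hxy
  rw [gr_adj] at hxy
  obtain ⟨hmem, hxyne⟩ := hxy
  have hmem' := hB hmem
  rw [Finset.mem_erase] at hmem'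
  rw [SimpleGraph.deleteEdges, SimpleGraph.sdiff_adj]
  refine ⟨gr_adj.mpr ⟨hmem'.2, hxyne⟩, ?_⟩
  rw [SimpleGraph.fromEdgeSet_adj]
  rintro ⟨h1, -⟩
  exact hmem'.1 (Set.mem_singleton_iff.mp h1)

private lemma no_two_disjoint_paths {T B1 B2 : Finset (Sym2 V)}
    (ht : (gr T).IsAcyclic) (h1 : B1 ⊆ T) (h2 : B2 ⊆ T)
    (hdisj : ∀ f, f ∈ B1 → f ∈ B2 → False) {a b : V} (hab : a ≠ b)
    (r1 : (gr B1).Reachable a b) (r2 : (gr B2).Reachable a b) : False := by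
  classical
  obtain ⟨p1⟩ := r1
  obtain ⟨p2⟩ := r2
  have htr1 : ∀ f ∈ (p1.toPath : (gr B1).Walk a b).edges, f ∈ (gr T).edgeSet := fun f hf => by
    have h := mem_edgeSet_gr.mp ((p1.toPath : (gr B1).Walk a b).edges_subset_edgeSet hf)
    exact mem_edgeSet_gr.mpr ⟨h1 h.1, h.2⟩
  have htr2 : ∀ f ∈ (p2.toPath : (gr B2).Walk a b).edges, f ∈ (gr T).edgeSet := fun f hf => by
    have h := mem_edgeSet_gr.mp ((p2.toPath : (gr B2).Walk a b).edges_subset_edgeSet hf)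
    exact mem_edgeSet_gr.mpr ⟨h2 h.1, h.2⟩
  set t1 := (p1.toPath : (gr B1).Walk a b).transfer (gr T) htr1 with ht1
  set t2 := (p2.toPath : (gr B2).Walk a b).transfer (gr T) htr2 with ht2
  have hp1 : t1.IsPath := (p1.toPath.2).transfer htr1
  have hp2 : t2.IsPath := (p2.toPath.2).transfer htr2
  have heq : t1 = t2 := by
    have := (SimpleGraph.isAcyclic_iff_path_unique.mp ht) ⟨t1, hp1⟩ ⟨t2, hp2⟩
    exact Subtype.ext_iff.mp this
  have hedges : (p1.toPath : (gr B1).Walk a b).edges = (p2.toPath : (gr B2).Walk a b).edges := by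
    have h := congrArg SimpleGraph.Walk.edges heq
    rwa [ht1, ht2, SimpleGraph.Walk.edges_transfer, SimpleGraph.Walk.edges_transfer] at h
  obtain ⟨f, hf⟩ := List.exists_mem_of_ne_nil _ (edges_ne_nil_of_ne hab (p1.toPath : (gr B1).Walk a b))
  have hfB1 : f ∈ B1 :=
    (mem_edgeSet_gr.mp ((p1.toPath : (gr B1).Walk a b).edges_subset_edgeSet hf)).1
  have hfB2 : f ∈ B2 := by
    rw [hedges] at hf
    exact (mem_edgeSet_gr.mp ((p2.toPath : (gr B2).Walk a b).edges_subset_edgeSet hf)).1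
  exact hdisj f hfB1 hfB2
private lemma coeff_ne_zero_of_connected (G : SimpleGraph V) [Fintype G.edgeSet] [Nonempty V]
    (h : G.Connected) : (chrP G).coeff 1 ≠ 0 := by
  classical
  set n := Fintype.card V with hn
  set E := G.edgeFinset with hE
  have hdE : ∀ e ∈ E, ¬e.IsDiag := fun e he =>
    G.not_isDiag_of_mem_edgeSet (SimpleGraph.mem_edgeFinset.mp he)
  have hgrE : gr E = G := by
    rw [hE, gr, SimpleGraph.coe_edgeFinset, SimpleGraph.fromEdgeSet_edgeSet]
  obtain ⟨enc0, hinj0⟩ := exists_injective_nat (Sym2 V)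
  haveI : Fintype (Sym2 V) := Fintype.ofFinite _
  set M := Finset.univ.sup enc0 with hM
  have hbd : ∀ e : Sym2 V, enc0 e ≤ M := fun e => Finset.le_sup (Finset.mem_univ e)
  set enc' : Sym2 V → ℕ := fun e => M - enc0 e with henc'
  have hinj' : Function.Injective enc' := by
    intro x y hxy
    apply hinj0
    have h1 := hbd x
    have h2 := hbd y
    simp only [henc'] at hxy
    omega
  set s := E.powerset.filter (fun A => cc A = 1) with hs
  set F : Finset (Sym2 V) → ℚ :=
    fun T => ∑ A ∈ s.filter (fun A => phi enc0 A = T), (-1 : ℚ) ^ A.card with hF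
  -- the fiber decomposition
  have hsum : (chrP G).coeff 1 = ∑ T ∈ E.powerset, F T := by
    rw [chrP_coeff]
    rw [← hE, ← hs]
    exact (Finset.sum_fiberwise_of_maps_to (fun A hA => by
      rw [Finset.mem_powerset]
      exact (phi_subset enc0 A).trans
        (Finset.mem_powerset.mp (Finset.mem_filter.mp hA).1)) _).symm
  -- key computation of each fiber sum
  have key : ∀ T, (s.filter (fun A => phi enc0 A = T)).Nonempty →
      F T = (-1 : ℚ) ^ (n - 1) * (if DD enc0 E T = ∅ then 1 else 0) := by
    intro T hfib
    obtain ⟨A₀, hA₀⟩ := hfib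
    rw [Finset.mem_filter] at hA₀
    obtain ⟨hA₀s, hphiA₀⟩ := hA₀
    rw [hs, Finset.mem_filter, Finset.mem_powerset] at hA₀s
    obtain ⟨hA₀E, hccA₀⟩ := hA₀s
    have hdA₀ : ∀ e ∈ A₀, ¬e.IsDiag := fun e he => hdE e (hA₀E he)
    have hTA₀ : T ⊆ A₀ := hphiA₀ ▸ phi_subset enc0 A₀
    have hTE : T ⊆ E := hTA₀.trans hA₀E
    have hdT : ∀ e ∈ T, ¬e.IsDiag := fun e he => hdA₀ e (hTA₀ he)
    have hfixT : ∀ e ∈ T, ¬ sconn (res enc0 T e) e := hphiA₀ ▸ phi_fixed enc0 A₀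
    have hconnA₀ : (gr A₀).Connected := (cc_eq_one_iff _).mp hccA₀
    have hconnT : (gr T).Connected := by
      rw [SimpleGraph.connected_iff]
      refine ⟨fun u v => ?_, inferInstance⟩
      exact reach_trans_of_edges (hconnA₀.preconnected u v)
        (fun f hf => hphiA₀ ▸ sconn_phi enc0 A₀ hdA₀ f hf)
    have htree : (gr T).IsTree := isTree_of_fixed enc0 hinj0 T hdT hconnT hfixT
    have hTcard : T.card + 1 = n := by
      haveI : Fintype ((gr T).edgeSet) := Fintype.ofFinite _
      have hef : (gr T).edgeFinset = T := by
        ext e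
        rw [SimpleGraph.mem_edgeFinset, mem_edgeSet_gr]
        exact ⟨fun h' => h'.1, fun h' => ⟨h', hdT e h'⟩⟩
      have := htree.card_edgeFinset
      rwa [hef] at this
    -- fiber description
    have hfiber : s.filter (fun A => phi enc0 A = T) =
        (DD enc0 E T).powerset.image (fun S => T ∪ S) := by
      ext A
      constructor
      · intro hA
        rw [Finset.mem_filter] at hA
        obtain ⟨hAs, hphiA⟩ := hA
        rw [hs, Finset.mem_filter, Finset.mem_powerset] at hAs
        obtain ⟨hAE, hccA⟩ := hAs
        have hdA : ∀ e ∈ A, ¬e.IsDiag := fun e he => hdE e (hAE he)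
        have hTA : T ⊆ A := hphiA ▸ phi_subset enc0 A
        rw [Finset.mem_image]
        refine ⟨A \ T, ?_, Finset.union_sdiff_of_subset hTA⟩
        rw [Finset.mem_powerset]
        intro e he
        rw [Finset.mem_sdiff] at he
        rw [DD, Finset.mem_filter]
        refine ⟨hAE he.1, he.2, ?_⟩
        have := sconn_res_phi enc0 A hdA e he.1 (by rw [hphiA]; exact he.2)
        rwa [hphiA] at this
      · intro hA
        rw [Finset.mem_image] at hA
        obtain ⟨S, hS, rfl⟩ := hA
        rw [Finset.mem_powerset] at hS
        have hS' : ∀ e ∈ S, e ∉ T ∧ sconn (res enc0 T e) e := by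
          intro e he
          have := hS he
          rw [DD, Finset.mem_filter] at this
          exact this.2
        rw [Finset.mem_filter]
        constructor
        · rw [hs, Finset.mem_filter, Finset.mem_powerset]
          refine ⟨Finset.union_subset hTE (fun e he => ?_), ?_⟩
          · have := hS he
            rw [DD, Finset.mem_filter] at this
            exact this.1
          · exact (cc_eq_one_iff _).mpr
              (hconnT.mono (gr_mono Finset.subset_union_left))
        · exact phi_union enc0 T S hdT hfixT hS'
    have hdisjTS : ∀ S ∈ (DD enc0 E T).powerset, Disjoint T S := by
      intro S hSm
      rw [Finset.mem_powerset] at hSm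
      rw [Finset.disjoint_right]
      intro e he
      have := hSm he
      rw [DD, Finset.mem_filter] at this
      exact this.2.1
    simp only [hF]
    rw [hfiber, Finset.sum_image (fun S1 h1 S2 h2 heq => by
      have e1 := Finset.union_sdiff_cancel_left (hdisjTS S1 h1)
      have e2 := Finset.union_sdiff_cancel_left (hdisjTS S2 h2)
      rw [← e1, ← e2, heq])]
    have : ∀ S ∈ (DD enc0 E T).powerset,
        ((-1 : ℚ)) ^ (T ∪ S).card = (-1 : ℚ) ^ (n - 1) * (-1 : ℚ) ^ S.card := by
      intro S hSm
      rw [Finset.card_union_of_disjoint (hdisjTS S hSm), pow_add]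
      congr 2
      omega
    rw [Finset.sum_congr rfl this, ← Finset.mul_sum, sum_powerset_neg_one_q]
  -- positivity of each term
  have hsq : (-1 : ℚ) ^ (n - 1) * (-1 : ℚ) ^ (n - 1) = 1 := by
    rw [← pow_add]
    exact Even.neg_one_pow ⟨n - 1, by ring⟩
  have hpos : ∀ T ∈ E.powerset, 0 ≤ (-1 : ℚ) ^ (n - 1) * F T := by
    intro T _
    by_cases hfib : (s.filter (fun A => phi enc0 A = T)).Nonempty
    · rw [key T hfib, ← mul_assoc, hsq, one_mul]
      split <;> norm_num
    · rw [hF]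
      simp only []
      rw [Finset.not_nonempty_iff_eq_empty.mp hfib, Finset.sum_empty, mul_zero]
  -- the distinguished spanning tree
  set T₁ := phi enc' E with hT₁
  have hT₁E : T₁ ⊆ E := phi_subset enc' E
  have hdT₁ : ∀ e ∈ T₁, ¬e.IsDiag := fun e he => hdE e (hT₁E he)
  have hconnE : (gr E).Connected := by rw [hgrE]; exact h
  have hconnT₁ : (gr T₁).Connected := by
    rw [SimpleGraph.connected_iff]
    refine ⟨fun u v => ?_, inferInstance⟩
    exact reach_trans_of_edges (hconnE.preconnected u v)
      (fun f hf => sconn_phi enc' E hdE f hf)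
  have htree₁ : (gr T₁).IsTree :=
    isTree_of_fixed enc' hinj' T₁ hdT₁ hconnT₁ (phi_fixed enc' E)
  have hfixT₁ : ∀ e ∈ T₁, ¬ sconn (res enc0 T₁ e) e := by
    intro e he
    refine tree_fixed T₁ hdT₁ htree₁ e he _ ?_
    intro f hf
    rw [res, Finset.mem_filter] at hf
    rw [Finset.mem_erase]
    exact ⟨fun hEq => by rw [hEq] at hf; exact lt_irrefl _ hf.2, hf.1⟩
  have hphiT₁ : phi enc0 T₁ = T₁ := by
    rw [phi]
    exact Finset.filter_true_of_mem hfixT₁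
  have hfib₁ : (s.filter (fun A => phi enc0 A = T₁)).Nonempty := by
    refine ⟨T₁, ?_⟩
    rw [Finset.mem_filter, hs, Finset.mem_filter, Finset.mem_powerset]
    exact ⟨⟨hT₁E, (cc_eq_one_iff _).mpr hconnT₁⟩, hphiT₁⟩
  have hDD₁ : DD enc0 E T₁ = ∅ := by
    rw [DD, Finset.filter_eq_empty_iff]
    rintro e heE ⟨heT₁, hsc⟩
    have hsc' : sconn (res enc' T₁ e) e := sconn_res_phi enc' E hdE e heE heT₁
    have hdisj : ∀ f, f ∈ res enc' T₁ e → f ∈ res enc0 T₁ e → False := by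
      intro f hf1 hf2
      rw [res, Finset.mem_filter] at hf1 hf2
      have b1 := hbd e
      have b2 := hbd f
      have := hf1.2
      have := hf2.2
      simp only [henc'] at *
      omega
    have hnd : ¬e.IsDiag := hdE e heE
    revert hsc hsc' hnd
    induction e using Sym2.ind with
    | _ a b =>
    intro hsc hsc' hnd
    rw [Sym2.mk_isDiag_iff] at hnd
    exact no_two_disjoint_paths ((SimpleGraph.isTree_iff _).mp htree₁).2
      (Finset.filter_subset _ _) (Finset.filter_subset _ _) hdisj hnd
      (sconn_mk.mp hsc') (sconn_mk.mp hsc)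
  have hFT₁ : (-1 : ℚ) ^ (n - 1) * F T₁ = 1 := by
    rw [key T₁ hfib₁, hDD₁, if_pos rfl, mul_one, hsq]
  -- conclude
  intro hzero
  have h1 : (-1 : ℚ) ^ (n - 1) * F T₁ ≤ ∑ T ∈ E.powerset, (-1 : ℚ) ^ (n - 1) * F T :=
    Finset.single_le_sum hpos (Finset.mem_powerset.mpr hT₁E)
  rw [hFT₁, ← Finset.mul_sum, ← hsum, hzero, mul_zero] at h1
  norm_num at h1


end Aux

theorem stmt_5 {V : Type*} [Fintype V] (G : SimpleGraph V) (hn : 1 ≤ Fintype.card V)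
    (P : Polynomial ℚ) (hP : ∀ x : ℕ, P.eval (x : ℚ) = (properColoringCount G x : ℚ)) :
    P.coeff 1 ≠ 0 ↔ G.Connected := by
  classical
  haveI : Nonempty V := Fintype.card_pos_iff.mp hn
  haveI : Fintype G.edgeSet := Fintype.ofFinite _
  rw [P_eq_chrP G P hP]
  constructor
  · intro hc
    by_contra hnc
    exact hc (coeff_eq_zero_of_not_connected G hnc)
  · intro hc
    exact coeff_ne_zero_of_connected G hc
end

section
/- For the path graph P_n on n ≥ 1 vertices, c(P_n) = 1, where c(G) := (-1)^n · Σ_{k=1}^{n} (-1)^k c_k(G)/k and c_k(G) is the number of ordered partitions of the vertex set into k nonempty independent subsets. -/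
open Finset

open Function

def Pr (n k : ℕ) (f : Fin n → Fin k) : Prop :=
  ∀ i j : Fin n, (i : ℕ) + 1 = (j : ℕ) → f i ≠ f j

instance (n k : ℕ) : DecidablePred (Pr n k) := fun _ =>
  inferInstanceAs (Decidable (∀ _, _))

def col (n k : ℕ) : Finset (Fin n → Fin k) :=
  univ.filter fun f => Pr n k f ∧ Surjective f

def Ncol (n k : ℕ) : ℕ := (col n k).card

lemma mem_col {n k : ℕ} {f : Fin n → Fin k} :
    f ∈ col n k ↔ Pr n k f ∧ Surjective f := by
  simp [col]

lemma orderedPartCount_path (n k : ℕ) :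
    orderedPartCount (SimpleGraph.pathGraph n) k = Ncol n k := by
  rw [orderedPartCount, Ncol, ← Nat.card_eq_finsetCard]
  have hcond : ∀ f ∈ col n k,
      (∀ i, (univ.filter (fun v => f v = i)).Nonempty) ∧
      (∀ i, IndepSet (SimpleGraph.pathGraph n) (univ.filter (fun v => f v = i))) ∧
      (∀ i j, i ≠ j → Disjoint (univ.filter (fun v => f v = i))
        (univ.filter (fun v => f v = j))) ∧
      (∀ v : Fin n, ∃ i, v ∈ univ.filter (fun w => f w = i)) := by
    intro f hf
    refine ⟨?_, ?_, ?_, ?_⟩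
    · intro i
      obtain ⟨v, hv⟩ := (mem_col.1 hf).2 i
      exact ⟨v, by simp [hv]⟩
    · intro i v hv w hw hadj
      simp only [mem_filter] at hv hw
      rcases SimpleGraph.pathGraph_adj.1 hadj with h | h
      · exact (mem_col.1 hf).1 v w h (hv.2.trans hw.2.symm)
      · exact (mem_col.1 hf).1 w v h (hw.2.trans hv.2.symm)
    · intro i j hij
      rw [Finset.disjoint_left]
      intro v hv hw
      simp only [mem_filter] at hv hw
      exact hij (hv.2.symm.trans hw.2)
    · intro v
      exact ⟨f v, by simp⟩
  refine (Nat.card_eq_of_bijective (fun F : {f : Fin n → Fin k // f ∈ col n k} =>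
    ⟨fun i => univ.filter (fun v => F.1 v = i), hcond F.1 F.2⟩) ⟨?_, ?_⟩).symm
  · rintro ⟨f, hf⟩ ⟨g, hg⟩ h
    simp only [Subtype.mk.injEq] at h ⊢
    funext v
    have : v ∈ univ.filter (fun w => g w = f v) := by
      rw [← congrFun h (f v)]; simp
    exact ((mem_filter.1 this).2).symm ▸ rfl
  · rintro ⟨J, h1, h2, h3, h4⟩
    classical
    set f : Fin n → Fin k := fun v => (h4 v).choose with hfdef
    have hfJ : ∀ v, v ∈ J (f v) := fun v => (h4 v).choose_spec
    have huniq : ∀ v i, v ∈ J i → f v = i := by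
      intro v i hv
      by_contra hne
      exact (Finset.disjoint_left.1 (h3 _ _ hne) (hfJ v)) hv
    have hPr : Pr n k f := by
      intro i j hij hfeq
      have hadj : (SimpleGraph.pathGraph n).Adj i j :=
        SimpleGraph.pathGraph_adj.2 (Or.inl hij)
      exact h2 (f i) i (hfJ i) j (hfeq ▸ hfJ j) hadj
    have hsurj : Surjective f := by
      intro i
      obtain ⟨v, hv⟩ := h1 i
      exact ⟨v, huniq v i hv⟩
    refine ⟨⟨f, mem_col.2 ⟨hPr, hsurj⟩⟩, ?_⟩
    simp only [Subtype.mk.injEq]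
    funext i
    ext v
    simp only [mem_filter, mem_univ, true_and]
    exact ⟨fun h => h ▸ hfJ v, huniq v i⟩

lemma Ncol_eq_zero {n k : ℕ} (h : n < k) : Ncol n k = 0 := by
  rw [Ncol, Finset.card_eq_zero, Finset.eq_empty_iff_forall_notMem]
  intro f hf
  have := Fintype.card_le_of_surjective f (mem_col.1 hf).2
  simp at this; omega

lemma Ncol_zero {n : ℕ} (h : 1 ≤ n) : Ncol n 0 = 0 := by
  rw [Ncol, Finset.card_eq_zero, Finset.eq_empty_iff_forall_notMem]
  intro f _
  exact (f ⟨0, h⟩).elim0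

lemma card_image_eq (n k : ℕ) (s : Finset (Fin k)) :
    ((univ : Finset (Fin n → Fin k)).filter
      fun g => Pr n k g ∧ image g univ = s).card = Ncol n s.card := by
  classical
  set e := s.orderIsoOfFin rfl with he
  refine (Finset.card_bij (fun h _ => fun v => (e (h v) : Fin k)) ?_ ?_ ?_).symm
  · intro h hh
    obtain ⟨hPr, hsurj⟩ := mem_col.1 hh
    simp only [mem_filter, mem_univ, true_and]
    constructor
    · intro v w hvw heq
      exact hPr v w hvw (e.injective (Subtype.coe_injective heq))
    · ext x
      simp only [mem_image, mem_univ, true_and]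
      constructor
      · rintro ⟨v, rfl⟩; exact (e (h v)).2
      · intro hx
        obtain ⟨v, hv⟩ := hsurj (e.symm ⟨x, hx⟩)
        exact ⟨v, by rw [hv]; simp⟩
  · intro h1 hh1 h2 hh2 heq
    funext v
    exact e.injective (Subtype.coe_injective (congrFun heq v))
  · intro g hg
    obtain ⟨hPr, himg⟩ := (mem_filter.1 hg).2
    have hmem : ∀ v, g v ∈ s := by
      intro v; rw [← himg]; exact mem_image_of_mem g (mem_univ v)
    refine ⟨fun v => e.symm ⟨g v, hmem v⟩, ?_, ?_⟩
    · refine mem_col.2 ⟨?_, ?_⟩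
      · intro v w hvw heq
        apply hPr v w hvw
        have := congrArg e heq
        simp only [OrderIso.apply_symm_apply] at this
        exact congrArg Subtype.val this
      · intro i
        obtain ⟨v, -, hv⟩ := mem_image.1
          (show (e i : Fin k) ∈ image g univ by rw [himg]; exact (e i).2)
        refine ⟨v, ?_⟩
        simp only
        rw [show (⟨g v, hmem v⟩ : s) = e i from Subtype.ext hv]
        exact e.symm_apply_apply i
    · funext v
      simp

lemma pr_cons {n k : ℕ} (hn : 1 ≤ n) (c : Fin k) (g : Fin n → Fin k) :
    Pr (n + 1) k (Fin.cons c g) ↔ Pr n k g ∧ c ≠ g ⟨0, hn⟩ := by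
  constructor
  · intro h
    refine ⟨?_, ?_⟩
    · intro i j hij
      have := h i.succ j.succ (by simp [Fin.val_succ]; omega)
      simpa using this
    · have := h 0 (Fin.succ ⟨0, hn⟩) (by simp)
      simpa only [Fin.cons_zero, Fin.cons_succ] using this
  · rintro ⟨h1, h2⟩ i j hij heq
    have hjn : (j : ℕ) < n + 1 := j.2
    have hin : (i : ℕ) < n + 1 := i.2
    by_cases hi : (i : ℕ) = 0
    · have hi0 : i = 0 := Fin.ext hi
      subst hi0
      have hj0 : j = Fin.succ ⟨0, hn⟩ := Fin.ext (by simp; omega)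
      subst hj0
      simp only [Fin.cons_zero, Fin.cons_succ] at heq
      exact h2 heq
    · have hjb : (j : ℕ) ≤ n := by omega
      set i' : Fin n := ⟨(i : ℕ) - 1, by omega⟩ with hi'
      set j' : Fin n := ⟨(j : ℕ) - 1, by omega⟩ with hj'
      have hieq : i = i'.succ := Fin.ext (by simp [hi']; omega)
      have hjeq : j = j'.succ := Fin.ext (by simp [hj']; omega)
      rw [hieq, hjeq, Fin.cons_succ, Fin.cons_succ] at heq
      exact h1 i' j' (by simp [hi', hj']; omega) heq

lemma surj_cons {n k : ℕ} (c : Fin k) (g : Fin n → Fin k) :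
    Surjective (Fin.cons c g : Fin (n + 1) → Fin k) ↔
      insert c (image g univ) = univ := by
  constructor
  · intro h
    ext y
    simp only [mem_insert, mem_image, mem_univ, iff_true, true_and]
    obtain ⟨v, hv⟩ := h y
    rcases Fin.eq_zero_or_eq_succ v with rfl | ⟨v', rfl⟩
    · left; simpa using hv.symm
    · right; exact ⟨v', by simpa using hv⟩
  · intro h y
    have hy : y ∈ insert c (image g univ) := by rw [h]; exact mem_univ y
    rcases mem_insert.1 hy with rfl | hy'
    · exact ⟨0, Fin.cons_zero _ _⟩
    · obtain ⟨v, -, hv⟩ := mem_image.1 hy'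
      exact ⟨v.succ, by simpa using hv⟩

lemma surj_iff_image {n k : ℕ} (g : Fin n → Fin k) :
    Surjective g ↔ image g univ = univ := by
  constructor
  · intro h; exact Finset.image_univ_of_surjective h
  · intro h y
    have : y ∈ image g univ := by rw [h]; exact mem_univ y
    obtain ⟨v, -, hv⟩ := mem_image.1 this
    exact ⟨v, hv⟩

lemma Ncol_rec (n k : ℕ) (hn : 1 ≤ n) (hk : 1 ≤ k) :
    Ncol (n + 1) k = (k - 1) * Ncol n k + k * Ncol n (k - 1) := by
  classical
  have h1 : Ncol (n + 1) k = ((univ : Finset (Fin k × (Fin n → Fin k))).filter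
      fun p => Pr n k p.2 ∧ p.1 ≠ p.2 ⟨0, hn⟩ ∧
        insert p.1 (image p.2 univ) = univ).card := by
    rw [Ncol]
    refine (Finset.card_equiv (Fin.consEquiv (fun _ : Fin (n+1) => Fin k)) ?_).symm
    rintro ⟨c, g⟩
    simp only [mem_filter, mem_univ, true_and]
    have hce : (Fin.consEquiv (fun _ : Fin (n+1) => Fin k)) (c, g) = Fin.cons c g := rfl
    rw [hce, mem_col, pr_cons hn, surj_cons]
    tauto
  rw [h1, Finset.card_filter, Fintype.sum_prod_type_right]
  have inner : ∀ g : Fin n → Fin k,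
      (∑ c : Fin k, if (Pr n k g ∧ c ≠ g ⟨0, hn⟩ ∧ insert c (image g univ) = univ)
        then 1 else 0) =
      (if Pr n k g ∧ Surjective g then k - 1 else 0) +
      (if Pr n k g ∧ (image g univ).card = k - 1 then 1 else 0) := by
    intro g
    by_cases hPr : Pr n k g
    · by_cases hS : Surjective g
      · have himg : image g univ = univ := (surj_iff_image g).1 hS
        have hcard : ¬((image g univ).card = k - 1) := by
          rw [himg, Finset.card_univ, Fintype.card_fin]; omega
        rw [if_pos ⟨hPr, hS⟩, if_neg (fun h => hcard h.2), add_zero]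
        have hcond : ∀ c : Fin k,
            (Pr n k g ∧ c ≠ g ⟨0, hn⟩ ∧ insert c (image g univ) = univ) ↔
            c ≠ g ⟨0, hn⟩ := by
          intro c
          simp [hPr, himg, Finset.insert_eq_self.2 (mem_univ c)]
        simp only [hcond]
        rw [← Finset.card_filter]
        rw [show (univ.filter fun c => c ≠ g ⟨0, hn⟩) = univ.erase (g ⟨0, hn⟩) by
          ext c; simp [Finset.mem_erase, and_comm]]
        rw [Finset.card_erase_of_mem (mem_univ _), Finset.card_univ, Fintype.card_fin]
      · have hkey : ∀ c : Fin k,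
            (c ≠ g ⟨0, hn⟩ ∧ insert c (image g univ) = univ) ↔
            univ \ image g univ = {c} := by
          intro c
          constructor
          · rintro ⟨hc0, hins⟩
            have hcni : c ∉ image g univ := by
              intro hc
              exact hS ((surj_iff_image g).2 (by rwa [Finset.insert_eq_self.2 hc] at hins))
            ext y
            simp only [Finset.mem_sdiff, mem_univ, true_and, Finset.mem_singleton]
            constructor
            · intro hy
              have : y ∈ insert c (image g univ) := by rw [hins]; exact mem_univ y
              rcases mem_insert.1 this with rfl | h'
              · rfl
              · exact absurd h' hy
            · rintro rfl; exact hcni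
          · intro hset
            have hcni : c ∉ image g univ := by
              have : c ∈ univ \ image g univ := by
                rw [hset]; exact Finset.mem_singleton_self c
              exact (Finset.mem_sdiff.1 this).2
            refine ⟨?_, ?_⟩
            · intro hc; exact hcni (hc ▸ mem_image_of_mem g (mem_univ _))
            · ext y
              simp only [mem_insert, mem_univ, iff_true]
              by_cases hy : y = c
              · exact Or.inl hy
              · right
                by_contra hy'
                have : y ∈ univ \ image g univ := Finset.mem_sdiff.2 ⟨mem_univ y, hy'⟩
                rw [hset] at this
                exact hy (Finset.mem_singleton.1 this)
        have hSfalse : ¬(Pr n k g ∧ Surjective g) := fun h => hS h.2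
        rw [if_neg hSfalse, zero_add]
        simp only [hPr, true_and]
        simp only [hkey]
        rw [← Finset.card_filter]
        by_cases hcard : (image g univ).card = k - 1
        · have hsd : (univ \ image g univ).card = 1 := by
            rw [Finset.card_sdiff_of_subset (Finset.subset_univ _), Finset.card_univ,
              Fintype.card_fin, hcard]
            omega
          obtain ⟨c0, hc0⟩ := Finset.card_eq_one.1 hsd
          rw [show (univ.filter fun c => univ \ image g univ = {c}) = {c0} by
            ext c
            simp only [mem_filter, mem_univ, true_and, Finset.mem_singleton, hc0]
            exact ⟨fun h => (Finset.singleton_injective h).symm, fun h => by rw [h]⟩]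
          simp [hcard]
        · rw [show (univ.filter fun c => univ \ image g univ = {c}) = ∅ by
            ext c
            simp only [mem_filter, mem_univ, true_and, Finset.notMem_empty, iff_false]
            intro h
            apply hcard
            have := congrArg Finset.card h
            rw [Finset.card_sdiff_of_subset (Finset.subset_univ _), Finset.card_univ,
              Fintype.card_fin, Finset.card_singleton] at this
            have hle := Finset.card_le_univ (image g univ)
            have hk' : Fintype.card (Fin k) = k := Fintype.card_fin k
            omega]
          simp [hcard]
    · simp [hPr]
  rw [Finset.sum_congr rfl (fun g _ => inner g), Finset.sum_add_distrib]
  congr 1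
  · rw [← Finset.sum_filter, Finset.sum_const, smul_eq_mul, mul_comm]
    rfl
  · rw [← Finset.card_filter]
    rw [Finset.card_eq_sum_card_fiberwise
      (f := fun g : Fin n → Fin k => image g univ)
      (t := Finset.powersetCard (k-1) univ)
      (fun g hg => by
        rw [Finset.mem_coe, Finset.mem_powersetCard]
        exact ⟨Finset.subset_univ _, (Finset.mem_filter.1 (Finset.mem_coe.1 hg)).2.2⟩)]
    have step : ∀ s ∈ Finset.powersetCard (k-1) (univ : Finset (Fin k)),
        (((univ : Finset (Fin n → Fin k)).filter
          fun g => Pr n k g ∧ (image g univ).card = k - 1).filter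
            fun g => image g univ = s).card = Ncol n (k-1) := by
      intro s hs
      have hscard : s.card = k - 1 := (Finset.mem_powersetCard.1 hs).2
      rw [Finset.filter_filter]
      rw [Finset.filter_congr (q := fun g : Fin n → Fin k => Pr n k g ∧ image g univ = s)
        (fun g _ => by
        constructor
        · rintro ⟨⟨hh1, hh2⟩, h3⟩; exact ⟨hh1, h3⟩
        · rintro ⟨hh1, h3⟩; exact ⟨⟨hh1, h3 ▸ hscard⟩, h3⟩)]
      rw [card_image_eq, hscard]
    rw [Finset.sum_congr rfl step, Finset.sum_const, smul_eq_mul,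
      Finset.card_powersetCard, Finset.card_univ, Fintype.card_fin]
    congr 1
    have h2 : k - (k - 1) = 1 := by omega
    rw [← Nat.choose_symm (Nat.sub_le k 1), h2, Nat.choose_one_right]

lemma Ncol_one_one : Ncol 1 1 = 1 := by
  rw [Ncol, col]
  rw [show (univ : Finset (Fin 1 → Fin 1)).filter
      (fun f => Pr 1 1 f ∧ Surjective f) = univ from Finset.filter_true_of_mem ?_]
  · simp
  · intro f _
    refine ⟨?_, ?_⟩
    · intro i j hij
      have hi := i.2; have hj := j.2; omega
    · intro y
      exact ⟨0, Subsingleton.elim _ _⟩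

lemma Tsum (n : ℕ) (hn : 1 ≤ n) :
    ∑ k ∈ Finset.Icc 1 n, (-1 : ℚ) ^ k * (Ncol n k : ℚ) / k = (-1 : ℚ) ^ n := by
  induction n, hn using Nat.le_induction with
  | base => simp [Ncol_one_one]
  | succ n hn ih =>
    have key : ∀ k ∈ Finset.Icc 1 (n + 1), (-1 : ℚ) ^ k * (Ncol (n + 1) k : ℚ) / k
        = ((-1 : ℚ) ^ k * (Ncol n k : ℚ) - (-1 : ℚ) ^ k * (Ncol n k : ℚ) / k)
          + (-1 : ℚ) ^ k * (Ncol n (k - 1) : ℚ) := by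
      intro k hk
      have hk1 : 1 ≤ k := (Finset.mem_Icc.1 hk).1
      rw [Ncol_rec n k hn hk1]
      have hk0 : (k : ℚ) ≠ 0 := Nat.cast_ne_zero.2 (by omega)
      push_cast [Nat.cast_sub hk1]
      field_simp
    rw [Finset.sum_congr rfl key, Finset.sum_add_distrib, Finset.sum_sub_distrib]
    have e1 : ∑ k ∈ Finset.Icc 1 (n + 1), (-1 : ℚ) ^ k * (Ncol n k : ℚ)
        = ∑ k ∈ Finset.Icc 1 n, (-1 : ℚ) ^ k * (Ncol n k : ℚ) := by
      rw [Finset.sum_Icc_succ_top (by omega), Ncol_eq_zero (by omega)]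
      simp
    have e2 : ∑ k ∈ Finset.Icc 1 (n + 1), (-1 : ℚ) ^ k * (Ncol n k : ℚ) / k
        = ∑ k ∈ Finset.Icc 1 n, (-1 : ℚ) ^ k * (Ncol n k : ℚ) / k := by
      rw [Finset.sum_Icc_succ_top (by omega), Ncol_eq_zero (by omega)]
      simp
    have e3 : ∑ k ∈ Finset.Icc 1 (n + 1), (-1 : ℚ) ^ k * (Ncol n (k - 1) : ℚ)
        = - ∑ k ∈ Finset.Icc 1 n, (-1 : ℚ) ^ k * (Ncol n k : ℚ) := by
      have hmap : Finset.Icc 1 (n + 1) =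
          Finset.map ⟨fun j => j + 1, add_left_injective 1⟩ (Finset.Icc 0 n) := by
        ext j
        simp only [Finset.mem_Icc, Finset.mem_map, Function.Embedding.coeFn_mk]
        constructor
        · rintro ⟨hj1, hj2⟩; exact ⟨j - 1, by omega, by omega⟩
        · rintro ⟨a, ha, rfl⟩; omega
      rw [hmap, Finset.sum_map]
      simp only [Function.Embedding.coeFn_mk, Nat.add_sub_cancel]
      have hsplit : Finset.Icc 0 n = insert 0 (Finset.Icc 1 n) := by
        ext j; simp; omega
      rw [hsplit, Finset.sum_insert (by simp)]
      rw [Ncol_zero hn]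
      simp only [Nat.cast_zero, mul_zero, zero_add]
      rw [← Finset.sum_neg_distrib]
      refine Finset.sum_congr rfl fun j hj => ?_
      rw [pow_succ]
      ring
    rw [e1, e2, e3, ih]
    ring

theorem stmt_7 (n : ℕ) (hn : 1 ≤ n) :
    cNum (SimpleGraph.pathGraph n) = 1 := by
  rw [cNum]
  simp only [Fintype.card_fin]
  rw [Finset.sum_congr rfl (fun k _ => by rw [orderedPartCount_path])]
  rw [Tsum n hn, ← mul_pow, neg_mul_neg, one_mul, one_pow]
end

section
/- Let r, s be positive integers and let a_1, ..., a_r and b_1, ..., b_s be positive integers such that ∏_{i=1}^{r} (x^{a_i} - 1) = ∏_{j=1}^{s} (x^{b_j} - 1) as polynomials in ℤ[x]. Then r = s and the multiset {a_1, ..., a_r} equals the multiset {b_1, ..., b_s}. -/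
open Polynomial

private lemma dvd_aux (A B : Multiset ℕ)
    (h : (A.map (fun n => (X : ℤ[X]) ^ n - 1)).prod
        = (B.map (fun n => (X : ℤ[X]) ^ n - 1)).prod) :
    ∀ N ∈ A, 0 < N → ∃ m ∈ B, N ∣ m := by
  intro N hN hNpos
  set ζ : ℂ := Complex.exp (2 * Real.pi * Complex.I / N)
  have hζ : IsPrimitiveRoot ζ N := Complex.isPrimitiveRoot_exp N hNpos.ne'
  set φ : ℤ[X] →+* ℂ := Polynomial.eval₂RingHom (Int.castRingHom ℂ) ζ
  have h2 := congrArg φ h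
  rw [map_multiset_prod, map_multiset_prod, Multiset.map_map, Multiset.map_map] at h2
  have hφ : ∀ n : ℕ, (φ ∘ fun n => (X : ℤ[X]) ^ n - 1) n = ζ ^ n - 1 := by
    intro n; simp [φ]
  have hL : (A.map (φ ∘ fun n => (X : ℤ[X]) ^ n - 1)).prod = 0 := by
    apply Multiset.prod_eq_zero
    have : (φ ∘ fun n => (X : ℤ[X]) ^ n - 1) N = 0 := by
      rw [hφ, hζ.pow_eq_one, sub_self]
    exact this ▸ Multiset.mem_map_of_mem _ hN
  rw [hL] at h2
  have hp := Multiset.prod_eq_zero_iff.1 h2.symm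
  obtain ⟨m, hm, hmp⟩ := Multiset.mem_map.1 hp
  refine ⟨m, hm, ?_⟩
  rw [← hζ.pow_eq_one_iff_dvd]
  have : ζ ^ m - 1 = 0 := by rw [← hφ m, hmp]
  exact sub_eq_zero.1 this

private lemma key (A : Multiset ℕ) : ∀ B : Multiset ℕ, (∀ n ∈ A, 0 < n) → (∀ n ∈ B, 0 < n) →
    (A.map (fun n => (X : ℤ[X]) ^ n - 1)).prod
      = (B.map (fun n => (X : ℤ[X]) ^ n - 1)).prod →
    A = B := by
  induction A using Multiset.strongInductionOn with
  | ih A IH =>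
  intro B hA hB h
  -- evaluate at 1 to handle empty cases
  have hempty : ∀ C : Multiset ℕ, C ≠ 0 →
      Polynomial.eval (1 : ℤ) ((C.map (fun n => (X : ℤ[X]) ^ n - 1)).prod) = 0 := by
    intro C hC
    obtain ⟨n, hn⟩ := Multiset.exists_mem_of_ne_zero hC
    rw [show Polynomial.eval (1:ℤ) = Polynomial.evalRingHom (1:ℤ) from rfl,
      map_multiset_prod, Multiset.map_map]
    apply Multiset.prod_eq_zero
    have : ((Polynomial.evalRingHom (1:ℤ)) ∘ fun n => (X : ℤ[X]) ^ n - 1) n = 0 := by simp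
    exact this ▸ Multiset.mem_map_of_mem _ hn
  rcases eq_or_ne A 0 with rfl | hA0
  · rcases eq_or_ne B 0 with rfl | hB0
    · rfl
    · exfalso
      have := hempty B hB0
      rw [← h] at this
      simp at this
  · rcases eq_or_ne B 0 with rfl | hB0
    · exfalso
      have := hempty A hA0
      rw [h] at this
      simp at this
    · have hAne : A.toFinset.Nonempty := by
        obtain ⟨n, hn⟩ := Multiset.exists_mem_of_ne_zero hA0
        exact ⟨n, Multiset.mem_toFinset.2 hn⟩
      have hBne : B.toFinset.Nonempty := by
        obtain ⟨n, hn⟩ := Multiset.exists_mem_of_ne_zero hB0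
        exact ⟨n, Multiset.mem_toFinset.2 hn⟩
      set NA := A.toFinset.max' hAne with hNAdef
      set NB := B.toFinset.max' hBne with hNBdef
      have hNAmem : NA ∈ A := Multiset.mem_toFinset.1 (A.toFinset.max'_mem hAne)
      have hNBmem : NB ∈ B := Multiset.mem_toFinset.1 (B.toFinset.max'_mem hBne)
      have hNApos : 0 < NA := hA _ hNAmem
      have hNBpos : 0 < NB := hB _ hNBmem
      obtain ⟨m, hmB, hdvd⟩ := dvd_aux A B h NA hNAmem hNApos
      obtain ⟨m', hm'A, hdvd'⟩ := dvd_aux B A h.symm NB hNBmem hNBpos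
      have hle1 : NA ≤ NB := le_trans (Nat.le_of_dvd (hB _ hmB) hdvd)
        (B.toFinset.le_max' m (Multiset.mem_toFinset.2 hmB))
      have hle2 : NB ≤ NA := le_trans (Nat.le_of_dvd (hA _ hm'A) hdvd')
        (A.toFinset.le_max' m' (Multiset.mem_toFinset.2 hm'A))
      have hNN : NA = NB := le_antisymm hle1 hle2
      have hmNA : m = NA := le_antisymm
        (hNN ▸ B.toFinset.le_max' m (Multiset.mem_toFinset.2 hmB))
        (Nat.le_of_dvd (hB _ hmB) hdvd)
      have hNAB : NA ∈ B := hmNA ▸ hmB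
      have hAeq : A = NA ::ₘ A.erase NA := (Multiset.cons_erase hNAmem).symm
      have hBeq : B = NA ::ₘ B.erase NA := (Multiset.cons_erase hNAB).symm
      rw [hAeq, hBeq, Multiset.map_cons, Multiset.map_cons, Multiset.prod_cons,
        Multiset.prod_cons] at h
      have hne : (X : ℤ[X]) ^ NA - 1 ≠ 0 := by
        intro h0
        have := congrArg (Polynomial.eval (0 : ℤ)) h0
        simp [zero_pow hNApos.ne'] at this
      have h' := mul_left_cancel₀ hne h
      have := IH (A.erase NA) (Multiset.erase_lt.2 hNAmem) (B.erase NA)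
        (fun n hn => hA n (Multiset.mem_of_mem_erase hn))
        (fun n hn => hB n (Multiset.mem_of_mem_erase hn)) h'
      rw [hAeq, hBeq, this]

theorem stmt_16 (r s : ℕ) (hr : 1 ≤ r) (hs : 1 ≤ s) (a : Fin r → ℕ) (b : Fin s → ℕ)
    (ha : ∀ i, 0 < a i) (hb : ∀ j, 0 < b j)
    (h : (∏ i : Fin r, ((Polynomial.X : Polynomial ℤ) ^ (a i) - 1))
        = ∏ j : Fin s, ((Polynomial.X : Polynomial ℤ) ^ (b j) - 1)) :
    r = s ∧ Multiset.map a Finset.univ.val = Multiset.map b Finset.univ.val := by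
  have heq : Multiset.map a Finset.univ.val = Multiset.map b Finset.univ.val := by
    apply key
    · intro n hn
      obtain ⟨i, _, rfl⟩ := Multiset.mem_map.1 hn
      exact ha i
    · intro n hn
      obtain ⟨j, _, rfl⟩ := Multiset.mem_map.1 hn
      exact hb j
    · rw [Multiset.map_map, Multiset.map_map]
      exact h
  refine ⟨?_, heq⟩
  have := congrArg Multiset.card heq
  simpa using this
end
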